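/- Fix k ∈ ℕ and n ≥ 1. For every π ∈ NC^{(k)}(n): Σ_{V ∈ blocks(π ∪ Kr(π))} (mult(V) − 1) = k, where mult(V) := |V| / |Red(V)| is the multiplicity of the block V of π ∪ Kr(π). -/

import Mathlib

open scoped BigOperators
attribute [local instance] Classical.propDecidable

/-- A (set) partition of a type `X`: nonempty blocks, every point in a unique block. -/
def IsPartition {X : Type*} (P : Finset (Finset X)) : Prop :=
  (∀ B ∈ P, B.Nonempty) ∧ ∀ x : X, ∃! B, B ∈ P ∧ x ∈ B

/-- Non-crossing collection of blocks in a linear order. -/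
def IsNonCrossing {X : Type*} [LinearOrder X] (P : Finset (Finset X)) : Prop :=
  ∀ a b c d : X, a < b → b < c → c < d →
    (∃ B ∈ P, a ∈ B ∧ c ∈ B) → (∃ B ∈ P, b ∈ B ∧ d ∈ B) →
    ∃ B ∈ P, a ∈ B ∧ b ∈ B

/-- The finset `NC(n)` of non-crossing partitions of `[n]` (modelled on `Fin n`). -/
noncomputable def ncFinset (n : ℕ) : Finset (Finset (Finset (Fin n))) :=
  Finset.univ.filter fun P => IsPartition P ∧ IsNonCrossing P

/-- The subtuple `(a_1,…,a_n)|V` of the entries indexed by `V`, in increasing order. -/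
noncomputable def restrictTuple {A : Type*} {n : ℕ} (a : Fin n → A) (V : Finset (Fin n)) :
    Fin V.card → A :=
  fun i => a (V.orderIsoOfFin rfl i).1
/-- The interleaved set `[m] ∪ [m̄]` with order `1 < 1̄ < 2 < 2̄ < ⋯ < m < m̄`
(unbarred = `false`, barred = `true`). -/
abbrev Interl (m : ℕ) := Lex (Fin m × Bool)

/-- The copy of a block of `[m]` inside the unbarred part of `[m] ∪ [m̄]`. -/
def unbar {m : ℕ} (B : Finset (Fin m)) : Finset (Interl m) :=
  B.image fun i => toLex (i, false)

/-- The copy of a block of `[m]` inside the barred part of `[m] ∪ [m̄]`. -/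
def barred {m : ℕ} (B : Finset (Fin m)) : Finset (Interl m) :=
  B.image fun i => toLex (i, true)

/-- The union `p ∪ q` of a partition `p` of `[m]` and a partition `q` of the barred copy
`[m̄]` (blocks of `q` being recorded by their unbarred labels), as a collection of blocks
of the interleaved set `[m] ∪ [m̄]`. -/
noncomputable def unionPart {m : ℕ} (p q : Finset (Finset (Fin m))) :
    Finset (Finset (Interl m)) :=
  p.image unbar ∪ q.image barred

/-- `P` refines `Q` (reverse refinement order: `P ≼ Q`). -/
def Refines {X : Type*} (P Q : Finset (Finset X)) : Prop :=
  ∀ B ∈ P, ∃ C ∈ Q, B ⊆ C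

/-- `q` is the Kreweras complement of `p`: `q` is a partition of `[m̄]` (identified with
a partition of `[m]` by relabeling) such that `p ∪ q` is non-crossing on the interleaved
set, and `q` is the greatest such partition for the reverse refinement order. -/
def IsKr {m : ℕ} (p q : Finset (Finset (Fin m))) : Prop :=
  IsPartition q ∧ IsNonCrossing (unionPart p q) ∧
    ∀ q' : Finset (Finset (Fin m)), IsPartition q' → IsNonCrossing (unionPart p q') →
      Refines q' q

/-- The Kreweras complement `Kr(p)`, as a function (defined via choice: for a
non-crossing partition `p` the complement exists and is unique). -/
noncomputable def kr {m : ℕ} (p : Finset (Finset (Fin m))) : Finset (Finset (Fin m)) :=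
  if h : ∃ q, IsKr p q then h.choose else ∅
/-- The reduction map `Red : [(k+1)n] → [n]`, sending `x` to its residue mod `n`
(with `Fin` modelling, `x ↦ x % n`). -/
def red {k n : ℕ} (x : Fin ((k + 1) * n)) : Fin n :=
  ⟨x.1 % n, Nat.mod_lt _ (Nat.pos_of_ne_zero (by rintro rfl; exact absurd x.2 (by simp)))⟩

/-- The image of a collection of blocks under the reduction map. -/
noncomputable def redPart {k n : ℕ} (P : Finset (Finset (Fin ((k + 1) * n)))) :
    Finset (Finset (Fin n)) :=
  P.image fun B => B.image red

/-- The reduction map on the interleaved set, preserving bars. -/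
def redInterl {k n : ℕ} (x : Interl ((k + 1) * n)) : Interl n :=
  toLex (red (ofLex x).1, (ofLex x).2)

/-- `NC^{(k)}(n)`: the non-crossing partitions of `[(k+1)n]` satisfying the mod `n`
reduction property, i.e. `Red(π)` is a non-crossing partition of `[n]` and
`Red(Kr(π))` is a non-crossing partition of `[n̄]`. -/
def NCk (k n : ℕ) : Set (Finset (Finset (Fin ((k + 1) * n)))) :=
  {π | IsPartition π ∧ IsNonCrossing π ∧
       IsPartition (redPart π) ∧ IsNonCrossing (redPart π) ∧
       IsPartition (redPart (kr π)) ∧ IsNonCrossing (redPart (kr π))}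

section Basics
variable {X : Type*} {P : Finset (Finset X)}

lemma part_unique (hP : IsPartition P) {B C : Finset X} {x : X}
    (hB : B ∈ P) (hC : C ∈ P) (hxB : x ∈ B) (hxC : x ∈ C) : B = C := by
  obtain ⟨D, _, hu⟩ := hP.2 x
  rw [hu B ⟨hB, hxB⟩, hu C ⟨hC, hxC⟩]

lemma part_disj (hP : IsPartition P) {B C : Finset X}
    (hB : B ∈ P) (hC : C ∈ P) (hne : B ≠ C) : Disjoint B C := by
  rw [Finset.disjoint_left]
  intro x hxB hxC
  exact hne (part_unique hP hB hC hxB hxC)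

lemma part_blockOf (hP : IsPartition P) (x : X) : ∃ B ∈ P, x ∈ B := by
  obtain ⟨B, hB, _⟩ := hP.2 x
  exact ⟨B, hB.1, hB.2⟩

/-- refinement between partitions gives at least as many blocks -/
lemma refines_card_le (hP : IsPartition P) {Q : Finset (Finset X)} (hQ : IsPartition Q)
    (h : Refines P Q) : Q.card ≤ P.card := by
  apply Finset.card_le_card_of_surjOn (fun B => if h' : ∃ C ∈ Q, B ⊆ C then h'.choose else ∅)
  intro C hC
  obtain ⟨x, hx⟩ := hQ.1 C hC
  obtain ⟨B, hB, hxB⟩ := part_blockOf hP x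
  have h' : ∃ C ∈ Q, B ⊆ C := h B hB
  refine ⟨B, hB, ?_⟩
  have h1 := h'.choose_spec
  have : h'.choose = C := part_unique hQ h1.1 hC (h1.2 hxB) hx
  simp only [dif_pos h', this]

lemma refines_antisymm (hP : IsPartition P) {Q : Finset (Finset X)} (hQ : IsPartition Q)
    (h1 : Refines P Q) (h2 : Refines Q P) : P = Q := by
  have key : ∀ B ∈ P, B ∈ Q := by
    intro B hB
    obtain ⟨C, hC, hBC⟩ := h1 B hB
    obtain ⟨D, hD, hCD⟩ := h2 C hC
    obtain ⟨x, hx⟩ := hP.1 B hB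
    have hBD : B = D := part_unique hP hB hD hx (hCD (hBC hx))
    have : C = B := by
      apply Finset.Subset.antisymm (hBD ▸ hCD) hBC
    rwa [← this]
  have key2 : ∀ B ∈ Q, B ∈ P := by
    intro B hB
    obtain ⟨C, hC, hBC⟩ := h2 B hB
    obtain ⟨D, hD, hCD⟩ := h1 C hC
    obtain ⟨x, hx⟩ := hQ.1 B hB
    have hBD : B = D := part_unique hQ hB hD hx (hCD (hBC hx))
    have : C = B := Finset.Subset.antisymm (hBD ▸ hCD) hBC
    rwa [← this]
  exact Finset.ext fun B => ⟨fun h => key B h, fun h => key2 B h⟩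


lemma refines_eq_of_card (hP : IsPartition P) {Q : Finset (Finset X)} (hQ : IsPartition Q)
    (h : Refines P Q) (hcard : P.card = Q.card) : P = Q := by
  classical
  -- f B := the Q-block containing B
  set f : Finset X → Finset X := fun B => if h' : ∃ C ∈ Q, B ⊆ C then h'.choose else ∅ with hf
  have hfmem : ∀ B ∈ P, f B ∈ Q ∧ B ⊆ f B := by
    intro B hB
    have h' : ∃ C ∈ Q, B ⊆ C := h B hB
    have := h'.choose_spec
    simp only [hf, dif_pos h']
    exact this
  have hcardsum : P.card = ∑ C ∈ Q, (P.filter (fun B => f B = C)).card :=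
    Finset.card_eq_sum_card_fiberwise (fun B hB => (hfmem B hB).1)
  have hfib1 : ∀ C ∈ Q, 1 ≤ (P.filter (fun B => f B = C)).card := by
    intro C hC
    rw [Nat.one_le_iff_ne_zero, ← Nat.pos_iff_ne_zero, Finset.card_pos]
    obtain ⟨x, hx⟩ := hQ.1 C hC
    obtain ⟨B, hB, hxB⟩ := part_blockOf hP x
    refine ⟨B, Finset.mem_filter.2 ⟨hB, ?_⟩⟩
    exact part_unique hQ (hfmem B hB).1 hC ((hfmem B hB).2 hxB) hx
  have hfibeq : ∀ C ∈ Q, (P.filter (fun B => f B = C)).card = 1 := by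
    by_contra hcon
    push_neg at hcon
    obtain ⟨C0, hC0, hne⟩ := hcon
    have h2 : 2 ≤ (P.filter (fun B => f B = C0)).card := by
      have := hfib1 C0 hC0; omega
    have : Q.card + 1 ≤ P.card := by
      rw [hcardsum]
      calc Q.card + 1 = (∑ _C ∈ Q.erase C0, 1) + 2 := by
            rw [Finset.sum_const, smul_eq_mul, mul_one, Finset.card_erase_of_mem hC0]
            have : 1 ≤ Q.card := Finset.card_pos.2 ⟨C0, hC0⟩
            omega
        _ ≤ (∑ C ∈ Q.erase C0, (P.filter (fun B => f B = C)).card)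
              + (P.filter (fun B => f B = C0)).card := by
            gcongr with C hC
            exact hfib1 C (Finset.mem_of_mem_erase hC)
        _ = ∑ C ∈ Q, (P.filter (fun B => f B = C)).card := by
            rw [Finset.sum_erase_add _ _ hC0]
    omega
  -- now each Q-block contains exactly one P-block; show C = that block
  apply Finset.ext
  intro B
  constructor
  · intro hB
    have hC := hfmem B hB
    -- show B = f B
    have : f B = B := by
      apply Finset.Subset.antisymm _ hC.2
      intro x hx
      obtain ⟨B', hB', hxB'⟩ := part_blockOf hP x
      have hfB' : f B' = f B := by
        exact part_unique hQ (hfmem B' hB').1 hC.1 ((hfmem B' hB').2 hxB') hx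
      have : B' = B := by
        have hcard1 := hfibeq (f B) hC.1
        rw [Finset.card_eq_one] at hcard1
        obtain ⟨a, ha⟩ := hcard1
        have m1 : B ∈ P.filter (fun B0 => f B0 = f B) := Finset.mem_filter.2 ⟨hB, rfl⟩
        have m2 : B' ∈ P.filter (fun B0 => f B0 = f B) := Finset.mem_filter.2 ⟨hB', hfB'⟩
        rw [ha, Finset.mem_singleton] at m1 m2
        rw [m2, ← m1]
      rwa [this] at hxB'
    rw [← this]; exact hC.1
  · intro hB
    obtain ⟨x, hx⟩ := hQ.1 B hB
    obtain ⟨B', hB', hxB'⟩ := part_blockOf hP x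
    have hfB' : f B' = B := part_unique hQ (hfmem B' hB').1 hB ((hfmem B' hB').2 hxB') hx
    -- as above B' = f B' = B
    have : f B' = B' := by
      apply Finset.Subset.antisymm _ (hfmem B' hB').2
      intro y hy
      obtain ⟨B'', hB'', hyB''⟩ := part_blockOf hP y
      have hfB'' : f B'' = f B' :=
        part_unique hQ (hfmem B'' hB'').1 (hfmem B' hB').1 ((hfmem B'' hB'').2 hyB'') hy
      have hcard1 := hfibeq (f B') (hfmem B' hB').1
      rw [Finset.card_eq_one] at hcard1
      obtain ⟨a, ha⟩ := hcard1
      have m1 : B' ∈ P.filter (fun B0 => f B0 = f B') := Finset.mem_filter.2 ⟨hB', rfl⟩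
      have m2 : B'' ∈ P.filter (fun B0 => f B0 = f B') := Finset.mem_filter.2 ⟨hB'', hfB''⟩
      rw [ha, Finset.mem_singleton] at m1 m2
      rw [m2, ← m1] at hyB''
      exact hyB''
    rw [← hfB', this]
    exact hB'

end Basics

section RelSec
variable {m : ℕ}

/-- `S` is a union of blocks of `p`. -/
def UB (p : Finset (Finset (Fin m))) (S : Finset (Fin m)) : Prop :=
  ∀ B ∈ p, B ⊆ S ∨ Disjoint B S

variable {p : Finset (Finset (Fin m))}

lemma UB.union {S T : Finset (Fin m)} (hS : UB p S) (hT : UB p T) : UB p (S ∪ T) := by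
  intro B hB
  rcases hS B hB with h | h
  · exact Or.inl (h.trans Finset.subset_union_left)
  rcases hT B hB with h' | h'
  · exact Or.inl (h'.trans Finset.subset_union_right)
  · exact Or.inr (Finset.disjoint_union_right.2 ⟨h, h'⟩)

lemma UB.sdiff {S T : Finset (Fin m)} (hS : UB p S) (hT : UB p T) : UB p (S \ T) := by
  intro B hB
  rcases hT B hB with h' | h'
  · refine Or.inr (Finset.disjoint_left.2 fun x hx hxd => ?_)
    exact (Finset.mem_sdiff.1 hxd).2 (h' hx)
  rcases hS B hB with h | h
  · refine Or.inl fun x hx => Finset.mem_sdiff.2 ⟨h hx, fun hc => ?_⟩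
    exact (Finset.disjoint_left.1 h') hx hc
  · exact Or.inr (Finset.disjoint_left.2 fun x hx hxd => (Finset.disjoint_left.1 h) hx
      (Finset.mem_sdiff.1 hxd).1)

lemma UB.compl {S : Finset (Fin m)} (hS : UB p S) : UB p Sᶜ := by
  have : (Sᶜ : Finset (Fin m)) = Finset.univ \ S := by
    ext x; simp
  rw [this]
  exact UB.sdiff (fun B _ => Or.inl (B.subset_univ)) hS

/-- the relation generating the Kreweras complement -/
def rel (p : Finset (Finset (Fin m))) (i j : Fin m) : Prop :=
  UB p (Finset.Ioc (min i j) (max i j))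

lemma rel_refl (i : Fin m) : rel p i i := by
  intro B hB
  right
  simp [Finset.disjoint_right]

lemma rel_symm {i j : Fin m} (h : rel p i j) : rel p j i := by
  unfold rel at *
  rwa [min_comm, max_comm]

lemma rel_of_Ioc {i j : Fin m} (hij : i ≤ j) (h : UB p (Finset.Ioc i j)) : rel p i j := by
  unfold rel
  rwa [min_eq_left hij, max_eq_right hij]

lemma rel_Ioc {i j : Fin m} (hij : i ≤ j) (h : rel p i j) : UB p (Finset.Ioc i j) := by
  unfold rel at h
  rwa [min_eq_left hij, max_eq_right hij] at h

lemma Ioc_union_Ioc {a b c : Fin m} (h1 : a ≤ b) (h2 : b ≤ c) :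
    Finset.Ioc a b ∪ Finset.Ioc b c = Finset.Ioc a c := by
  ext x
  simp only [Finset.mem_union, Finset.mem_Ioc, Fin.le_def, Fin.lt_def] at *
  omega

lemma Ioc_sdiff_right {a b c : Fin m} (h1 : a ≤ b) (h2 : b ≤ c) :
    Finset.Ioc a c \ Finset.Ioc b c = Finset.Ioc a b := by
  ext x
  simp only [Finset.mem_sdiff, Finset.mem_Ioc, not_and, not_le, Fin.le_def, Fin.lt_def] at *
  omega

lemma Ioc_sdiff_left {a b c : Fin m} (h1 : a ≤ b) (h2 : b ≤ c) :
    Finset.Ioc a c \ Finset.Ioc a b = Finset.Ioc b c := by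
  ext x
  simp only [Finset.mem_sdiff, Finset.mem_Ioc, not_and, not_le, Fin.le_def, Fin.lt_def] at *
  omega

lemma rel_trans {i j l : Fin m} (h1 : rel p i j) (h2 : rel p j l) : rel p i l := by
  rcases le_total i j with hij | hij <;> rcases le_total j l with hjl | hjl <;>
    rcases le_total i l with hil | hil
  · refine rel_of_Ioc hil ?_
    rw [← Ioc_union_Ioc hij hjl]
    exact UB.union (rel_Ioc hij h1) (rel_Ioc hjl h2)
  · have : i = l := le_antisymm (le_trans hij hjl) hil
    subst this; exact rel_refl i
  · refine rel_of_Ioc hil ?_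
    rw [← Ioc_sdiff_right hil hjl]
    exact UB.sdiff (rel_Ioc hij h1) (rel_Ioc hjl (rel_symm h2))
  · refine rel_symm (rel_of_Ioc hil ?_)
    rw [← Ioc_sdiff_right hil hij]
    exact UB.sdiff (rel_Ioc hjl (rel_symm h2)) (rel_Ioc hij h1)
  · refine rel_of_Ioc hil ?_
    rw [← Ioc_sdiff_left hij hil]
    exact UB.sdiff (rel_Ioc hjl h2) (rel_Ioc hij (rel_symm h1))
  · refine rel_symm (rel_of_Ioc hil ?_)
    rw [← Ioc_sdiff_left hjl hil]
    exact UB.sdiff (rel_Ioc hij (rel_symm h1)) (rel_Ioc hjl h2)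
  · have : i = l := le_antisymm hil (le_trans hjl hij)
    subst this; exact rel_refl i
  · refine rel_symm (rel_of_Ioc hil ?_)
    rw [← Ioc_union_Ioc hjl hij]
    exact UB.union (rel_Ioc hjl (rel_symm h2)) (rel_Ioc hij (rel_symm h1))

/-- the `rel`-class of `i`. -/
noncomputable def classOf (p : Finset (Finset (Fin m))) (i : Fin m) : Finset (Fin m) :=
  Finset.univ.filter (rel p i)

lemma mem_classOf {i j : Fin m} : j ∈ classOf p i ↔ rel p i j := by
  simp [classOf]

lemma classOf_eq_of_rel {i j : Fin m} (h : rel p i j) : classOf p i = classOf p j := by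
  ext x
  simp only [mem_classOf]
  exact ⟨fun h' => rel_trans (rel_symm h) h', fun h' => rel_trans h h'⟩

/-- the explicit Kreweras complement of `p`. -/
noncomputable def qExp (p : Finset (Finset (Fin m))) : Finset (Finset (Fin m)) :=
  Finset.univ.image (classOf p)

lemma classOf_mem_qExp (i : Fin m) : classOf p i ∈ qExp p :=
  Finset.mem_image.2 ⟨i, Finset.mem_univ i, rfl⟩

lemma qExp_isPartition : IsPartition (qExp p) := by
  constructor
  · intro B hB
    obtain ⟨i, _, rfl⟩ := Finset.mem_image.1 hB
    exact ⟨i, mem_classOf.2 (rel_refl i)⟩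
  · intro x
    refine ⟨classOf p x, ⟨classOf_mem_qExp x, mem_classOf.2 (rel_refl x)⟩, ?_⟩
    rintro D ⟨hD, hxD⟩
    obtain ⟨i, _, rfl⟩ := Finset.mem_image.1 hD
    exact classOf_eq_of_rel (mem_classOf.1 hxD)

lemma rel_of_mem_qExp {D : Finset (Fin m)} (hD : D ∈ qExp p) {x y : Fin m}
    (hx : x ∈ D) (hy : y ∈ D) : rel p x y := by
  obtain ⟨i, _, rfl⟩ := Finset.mem_image.1 hD
  exact rel_trans (rel_symm (mem_classOf.1 hx)) (mem_classOf.1 hy)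

end RelSec

-- NEW PART BELOW
section NCStruct
variable {m : ℕ} {p : Finset (Finset (Fin m))}

/-- the convex hull of a block is a union of blocks -/
lemma hull_UB (hp : IsPartition p) (hnc : IsNonCrossing p) {B : Finset (Fin m)} (hB : B ∈ p)
    (hne : B.Nonempty) : UB p (Finset.Icc (B.min' hne) (B.max' hne)) := by
  intro B2 hB2
  by_cases hd : Disjoint B2 (Finset.Icc (B.min' hne) (B.max' hne))
  · exact Or.inr hd
  left
  rw [Finset.not_disjoint_iff] at hd
  obtain ⟨c, hcB2, hcI⟩ := hd
  rw [Finset.mem_Icc] at hcI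
  by_cases hBB2 : B2 = B
  · subst hBB2
    intro d hd
    rw [Finset.mem_Icc]
    exact ⟨Finset.min'_le _ _ hd, Finset.le_max' _ _ hd⟩
  have hcmin : B.min' hne < c := by
    rcases lt_or_eq_of_le hcI.1 with h | h
    · exact h
    · exact absurd (part_unique hp hB2 hB hcB2 (h ▸ B.min'_mem hne)) hBB2
  have hcmax : c < B.max' hne := by
    rcases lt_or_eq_of_le hcI.2 with h | h
    · exact h
    · exact absurd (part_unique hp hB2 hB hcB2 (h ▸ B.max'_mem hne)) hBB2
  intro d hdB2
  rw [Finset.mem_Icc]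
  by_contra hdI
  rw [not_and_or, not_le, not_le] at hdI
  rcases hdI with hlt | hgt
  · -- d < min ≤ c ≤ max, crossing d min c max
    obtain ⟨E, hE, hdE, hminE⟩ := hnc d (B.min' hne) c (B.max' hne) hlt hcmin hcmax
      ⟨B2, hB2, hdB2, hcB2⟩ ⟨B, hB, B.min'_mem hne, B.max'_mem hne⟩
    have h1 : E = B := part_unique hp hE hB hminE (B.min'_mem hne)
    have h2 : E = B2 := part_unique hp hE hB2 hdE hdB2
    exact hBB2 (h2 ▸ h1)
  · obtain ⟨E, hE, hminE, hcE⟩ := hnc (B.min' hne) c (B.max' hne) d hcmin hcmax hgt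
      ⟨B, hB, B.min'_mem hne, B.max'_mem hne⟩ ⟨B2, hB2, hcB2, hdB2⟩
    have h1 : E = B := part_unique hp hE hB hminE (B.min'_mem hne)
    have h2 : E = B2 := part_unique hp hE hB2 hcE hcB2
    exact hBB2 (h2 ▸ h1)

/-- the open gap between two consecutive elements of a block is a union of blocks -/
lemma gap_UB (hp : IsPartition p) (hnc : IsNonCrossing p) {B : Finset (Fin m)} (hB : B ∈ p)
    {b1 b2 : Fin m} (hb1 : b1 ∈ B) (hb2 : b2 ∈ B) (h12 : b1 < b2)
    (hcons : ∀ z ∈ B, ¬(b1 < z ∧ z < b2)) : UB p (Finset.Ioo b1 b2) := by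
  intro B2 hB2
  by_cases hd : Disjoint B2 (Finset.Ioo b1 b2)
  · exact Or.inr hd
  left
  rw [Finset.not_disjoint_iff] at hd
  obtain ⟨c, hcB2, hcI⟩ := hd
  rw [Finset.mem_Ioo] at hcI
  have hBB2 : B2 ≠ B := by
    intro h
    exact hcons c (h ▸ hcB2) hcI
  intro d hdB2
  rw [Finset.mem_Ioo]
  by_contra hdI
  rw [not_and_or, not_lt, not_lt] at hdI
  rcases hdI with hle | hge
  · have hlt : d < b1 := by
      rcases lt_or_eq_of_le hle with h | h
      · exact h
      · exact absurd (part_unique hp hB2 hB hdB2 (h ▸ hb1)) hBB2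
    obtain ⟨E, hE, hdE, hb1E⟩ := hnc d b1 c b2 hlt hcI.1 hcI.2
      ⟨B2, hB2, hdB2, hcB2⟩ ⟨B, hB, hb1, hb2⟩
    have h1 : E = B := part_unique hp hE hB hb1E hb1
    have h2 : E = B2 := part_unique hp hE hB2 hdE hdB2
    exact hBB2 (h2 ▸ h1)
  · have hgt : b2 < d := by
      rcases lt_or_eq_of_le hge with h | h
      · exact h
      · exact absurd (part_unique hp hB2 hB hdB2 (h.symm ▸ hb2)) hBB2
    obtain ⟨E, hE, hb1E, hcE⟩ := hnc b1 c b2 d hcI.1 hcI.2 hgt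
      ⟨B, hB, hb1, hb2⟩ ⟨B2, hB2, hcB2, hdB2⟩
    have h1 : E = B := part_unique hp hE hB hb1E hb1
    have h2 : E = B2 := part_unique hp hE hB2 hcE hcB2
    exact hBB2 (h2 ▸ h1)

lemma Ioo_eq_Ioc_pred {b1 b2 : Fin m} (h12 : b1 < b2) :
    Finset.Ioo b1 b2 = Finset.Ioc b1 ⟨b2.val - 1, by omega⟩ := by
  ext x
  simp only [Finset.mem_Ioo, Finset.mem_Ioc, Fin.lt_def, Fin.le_def]
  have := b1.isLt
  omega

/-- consecutive elements of a block: `b1` is kr-related to `b2 - 1`. -/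
lemma rel_gap (hp : IsPartition p) (hnc : IsNonCrossing p) {B : Finset (Fin m)} (hB : B ∈ p)
    {b1 b2 : Fin m} (hb1 : b1 ∈ B) (hb2 : b2 ∈ B) (h12 : b1 < b2)
    (hcons : ∀ z ∈ B, ¬(b1 < z ∧ z < b2)) :
    rel p b1 ⟨b2.val - 1, by omega⟩ := by
  apply rel_of_Ioc
  · rw [Fin.le_def]; simp only []
    have := Fin.lt_def.1 h12
    omega
  · rw [← Ioo_eq_Ioc_pred h12]
    exact gap_UB hp hnc hB hb1 hb2 h12 hcons

/-- wrap: if `min B ≥ 1` then `min B - 1` is kr-related to `max B`. -/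
lemma rel_wrap (hp : IsPartition p) (hnc : IsNonCrossing p) {B : Finset (Fin m)} (hB : B ∈ p)
    (hne : B.Nonempty) (hmin : 1 ≤ (B.min' hne).val) :
    rel p ⟨(B.min' hne).val - 1, by omega⟩ (B.max' hne) := by
  apply rel_of_Ioc
  · rw [Fin.le_def]; simp only []
    have := Fin.le_def.1 (B.min'_le _ (B.max'_mem hne))
    omega
  · have : Finset.Ioc (⟨(B.min' hne).val - 1, by omega⟩ : Fin m) (B.max' hne)
        = Finset.Icc (B.min' hne) (B.max' hne) := by
      ext x
      simp only [Finset.mem_Ioc, Finset.mem_Icc, Fin.lt_def, Fin.le_def]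
      omega
    rw [this]
    exact hull_UB hp hnc hB hne

/-- wrap at zero : if `min B = 0` and `max B < m-1` then `max B` is related to `m-1`. -/
lemma rel_wrap0 (hp : IsPartition p) (hnc : IsNonCrossing p) {B : Finset (Fin m)} (hB : B ∈ p)
    (hne : B.Nonempty) (hmin : (B.min' hne).val = 0) (hm : 0 < m) :
    rel p (B.max' hne) ⟨m - 1, by omega⟩ := by
  rcases eq_or_lt_of_le (Nat.le_sub_one_of_lt (B.max' hne).isLt) with heq | hlt
  · have : B.max' hne = (⟨m - 1, by omega⟩ : Fin m) := by
      apply Fin.ext; exact heq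
    rw [this]; exact rel_refl _
  apply rel_of_Ioc
  · rw [Fin.le_def]
    exact Nat.le_sub_one_of_lt (B.max' hne).isLt
  · have : Finset.Ioc (B.max' hne) (⟨m - 1, by omega⟩ : Fin m)
        = (Finset.Icc (B.min' hne) (B.max' hne))ᶜ := by
      ext x
      simp only [Finset.mem_Ioc, Finset.mem_compl, Finset.mem_Icc, Fin.lt_def, Fin.le_def,
        not_and, not_le, hmin]
      have := x.isLt
      omega
    rw [this]
    exact UB.compl (hull_UB hp hnc hB hne)

end NCStruct

section CountSec
variable {m : ℕ} {p : Finset (Finset (Fin m))}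

/-- the key counting identity `|p| + |Kr p| = m + 1`. -/
lemma count_qExp (hm : 0 < m) (hp : IsPartition p) (hnc : IsNonCrossing p) :
    p.card + (qExp p).card = m + 1 := by
  classical
  set jset : Finset (Fin m) := Finset.univ.filter (fun j => ∃ i, i < j ∧ rel p i j) with hjset
  -- (a) |qExp p| + |jset| = m
  have ha : (qExp p).card + jset.card = m := by
    have hbij : (Finset.univ.filter (fun j => ¬ ∃ i, i < j ∧ rel p i j)).card
        = (qExp p).card := by
      apply Finset.card_bij (fun x _ => classOf p x)
      · intro a _
        exact classOf_mem_qExp a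
      · intro a ha' b hb' hab
        simp only [Finset.mem_filter, Finset.mem_univ, true_and] at ha' hb'
        have hrel : rel p a b := by
          have : b ∈ classOf p a := hab ▸ mem_classOf.2 (rel_refl b)
          exact mem_classOf.1 this
        by_contra hne
        rcases lt_or_gt_of_ne hne with h | h
        · exact hb' ⟨a, h, hrel⟩
        · exact ha' ⟨b, h, rel_symm hrel⟩
      · intro D hD
        obtain ⟨i, _, rfl⟩ := Finset.mem_image.1 hD
        have hne : (classOf p i).Nonempty := ⟨i, mem_classOf.2 (rel_refl i)⟩
        set z := (classOf p i).min' hne with hz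
        have hzD : z ∈ classOf p i := (classOf p i).min'_mem hne
        refine ⟨z, Finset.mem_filter.2 ⟨Finset.mem_univ z, ?_⟩, ?_⟩
        · rintro ⟨w, hwz, hwrel⟩
          have : w ∈ classOf p i := by
            rw [classOf_eq_of_rel (mem_classOf.1 hzD)]
            exact mem_classOf.2 (rel_symm hwrel)
          exact absurd (Finset.min'_le _ _ this) (not_le.2 hwz)
        · exact (classOf_eq_of_rel (mem_classOf.1 hzD)).symm
    rw [← hbij, Nat.add_comm]
    have := Finset.card_filter_add_card_filter_not (s := (Finset.univ : Finset (Fin m)))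
      (p := fun j => ∃ i, i < j ∧ rel p i j)
    simp only [Finset.card_univ, Fintype.card_fin] at this
    exact this
  -- (b) |jset| = |p| - 1
  obtain ⟨B0, hB0, h0B0⟩ := part_blockOf hp ⟨0, hm⟩
  have hb : jset.card + 1 = p.card := by
    have hbij2 : (p.filter (fun B => (⟨0, hm⟩ : Fin m) ∉ B)).card = jset.card := by
      apply Finset.card_bij (fun B hB => B.max' (hp.1 B (Finset.mem_filter.1 hB).1))
      · intro B hB'
        rw [Finset.mem_filter] at hB'
        obtain ⟨hBp, h0B⟩ := hB'
        have hne : B.Nonempty := hp.1 B hBp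
        have hmin1 : 1 ≤ (B.min' hne).val := by
          rcases Nat.eq_zero_or_pos (B.min' hne).val with h | h
          · exfalso
            apply h0B
            have : B.min' hne = (⟨0, hm⟩ : Fin m) := Fin.ext h
            exact this ▸ B.min'_mem hne
          · exact h
        simp only [hjset, Finset.mem_filter, Finset.mem_univ, true_and]
        refine ⟨⟨(B.min' hne).val - 1, by omega⟩, ?_, rel_wrap hp hnc hBp hne hmin1⟩
        rw [Fin.lt_def]
        have h1 := Fin.le_def.1 (B.min'_le _ (B.max'_mem hne))
        simp only []
        omega
      · intro B hB' C hC' h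
        have hBp := (Finset.mem_filter.1 hB').1
        have hCp := (Finset.mem_filter.1 hC').1
        exact part_unique hp hBp hCp (h ▸ Finset.max'_mem B _) (Finset.max'_mem C _)
      · intro j hj
        simp only [hjset, Finset.mem_filter, Finset.mem_univ, true_and] at hj
        obtain ⟨i, hij, hrel⟩ := hj
        obtain ⟨B, hBp, hjB⟩ := part_blockOf hp j
        have hBsub : B ⊆ Finset.Ioc i j := by
          rcases rel_Ioc (le_of_lt hij) hrel B hBp with h | h
          · exact h
          · exact absurd (Finset.mem_Ioc.2 ⟨hij, le_refl j⟩ : j ∈ Finset.Ioc i j)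
              (Finset.disjoint_left.1 h hjB) |> False.elim
        have hne : B.Nonempty := hp.1 B hBp
        refine ⟨B, Finset.mem_filter.2 ⟨hBp, ?_⟩, ?_⟩
        · intro h0B
          have := Finset.mem_Ioc.1 (hBsub h0B)
          rw [Fin.lt_def] at this
          exact absurd this.1 (by simp)
        · apply le_antisymm
          · apply Finset.max'_le
            intro y hy
            exact (Finset.mem_Ioc.1 (hBsub hy)).2
          · exact Finset.le_max' _ _ hjB
    have hfe : p.filter (fun B => (⟨0, hm⟩ : Fin m) ∉ B) = p.erase B0 := by
      ext B
      simp only [Finset.mem_filter, Finset.mem_erase]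
      constructor
      · rintro ⟨hBp, h0B⟩
        refine ⟨fun h => h0B (h ▸ h0B0), hBp⟩
      · rintro ⟨hne, hBp⟩
        refine ⟨hBp, fun h0B => hne (part_unique hp hBp hB0 h0B h0B0)⟩
    rw [← hbij2, hfe, Finset.card_erase_of_mem hB0]
    have : 1 ≤ p.card := Finset.card_pos.2 ⟨B0, hB0⟩
    omega
  omega

end CountSec

-- NEW PART
section InterlSec
variable {m : ℕ}

/-- unbarred copy of a point -/
def ub (i : Fin m) : Interl m := toLex (i, false)
/-- barred copy of a point -/
def bb (i : Fin m) : Interl m := toLex (i, true)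

lemma ub_lt_ub {i j : Fin m} : ub i < ub j ↔ i < j := by
  rw [ub, ub, Prod.Lex.toLex_lt_toLex (x := (i, false)) (y := (j, false))]
  simp
lemma bb_lt_bb {i j : Fin m} : bb i < bb j ↔ i < j := by
  rw [bb, bb, Prod.Lex.toLex_lt_toLex (x := (i, true)) (y := (j, true))]
  simp
lemma ub_lt_bb {i j : Fin m} : ub i < bb j ↔ i ≤ j := by
  rw [ub, bb, Prod.Lex.toLex_lt_toLex (x := (i, false)) (y := (j, true))]; dsimp only
  constructor
  · rintro (h | ⟨rfl, _⟩)
    · exact le_of_lt h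
    · exact le_refl i
  · intro h
    rcases lt_or_eq_of_le h with h | h
    · exact Or.inl h
    · exact Or.inr ⟨h, Bool.false_lt_true⟩
lemma bb_lt_ub {i j : Fin m} : bb i < ub j ↔ i < j := by
  rw [ub, bb, Prod.Lex.toLex_lt_toLex (x := (i, true)) (y := (j, false))]; dsimp only
  constructor
  · rintro (h | ⟨rfl, h⟩)
    · exact h
    · exact absurd h (by simp : ¬ (true:Bool) < false)
  · exact Or.inl

lemma mem_unbar {B : Finset (Fin m)} {i : Fin m} : ub i ∈ unbar B ↔ i ∈ B := by
  unfold unbar ub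
  simp only [Finset.mem_image]
  constructor
  · rintro ⟨j, hj, hji⟩
    have h2 : (j, false) = (i, false) := hji
    have h3 : j = i := congrArg Prod.fst h2
    rwa [h3] at hj
  · exact fun h => ⟨i, h, rfl⟩
lemma mem_barred {B : Finset (Fin m)} {i : Fin m} : bb i ∈ barred B ↔ i ∈ B := by
  unfold barred bb
  simp only [Finset.mem_image]
  constructor
  · rintro ⟨j, hj, hji⟩
    have h2 : (j, true) = (i, true) := hji
    have h3 : j = i := congrArg Prod.fst h2
    rwa [h3] at hj
  · exact fun h => ⟨i, h, rfl⟩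
lemma ub_not_mem_barred {B : Finset (Fin m)} {i : Fin m} : ub i ∉ barred B := by
  unfold barred ub
  simp only [Finset.mem_image]
  rintro ⟨j, _, hji⟩
  have h2 : (j, true) = (i, false) := hji
  simpa using (congrArg Prod.snd h2 : true = false)
lemma bb_not_mem_unbar {B : Finset (Fin m)} {i : Fin m} : bb i ∉ unbar B := by
  unfold unbar bb
  simp only [Finset.mem_image]
  rintro ⟨j, _, hji⟩
  have h2 : (j, false) = (i, true) := hji
  simpa using (congrArg Prod.snd h2 : false = true)

lemma mem_unionPart {p q : Finset (Finset (Fin m))} {V : Finset (Interl m)} :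
    V ∈ unionPart p q ↔ (∃ B ∈ p, V = unbar B) ∨ (∃ C ∈ q, V = barred C) := by
  unfold unionPart
  simp only [Finset.mem_union, Finset.mem_image]
  constructor
  · rintro (⟨B, hB, rfl⟩ | ⟨C, hC, rfl⟩)
    · exact Or.inl ⟨B, hB, rfl⟩
    · exact Or.inr ⟨C, hC, rfl⟩
  · rintro (⟨B, hB, rfl⟩ | ⟨C, hC, rfl⟩)
    · exact Or.inl ⟨B, hB, rfl⟩
    · exact Or.inr ⟨C, hC, rfl⟩

lemma no_mixed_block {p q : Finset (Finset (Fin m))} {V : Finset (Interl m)}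
    (hV : V ∈ unionPart p q) {i j : Fin m} (hi : ub i ∈ V) (hj : bb j ∈ V) : False := by
  rcases mem_unionPart.1 hV with ⟨B, _, rfl⟩ | ⟨C, _, rfl⟩
  · exact bb_not_mem_unbar hj
  · exact ub_not_mem_barred hi

/-- every point of `Interl m` is `ub i` or `bb i` -/
lemma interl_cases (z : Interl m) : (∃ i, z = ub i) ∨ (∃ i, z = bb i) := by
  rcases Bool.eq_false_or_eq_true (ofLex z).2 with h | h
  · refine Or.inr ⟨(ofLex z).1, ?_⟩
    show z = toLex ((ofLex z).1, true)
    rw [← h]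
    rfl
  · refine Or.inl ⟨(ofLex z).1, ?_⟩
    show z = toLex ((ofLex z).1, false)
    rw [← h]
    rfl

theorem isKr_qExp {p : Finset (Finset (Fin m))} (hp : IsPartition p)
    (hnc : IsNonCrossing p) : IsKr p (qExp p) := by
  refine ⟨qExp_isPartition, ?_, ?_⟩
  · -- non-crossing of the union
    intro a b c d hab hbc hcd hac hbd
    obtain ⟨V1, hV1, haV1, hcV1⟩ := hac
    obtain ⟨V2, hV2, hbV2, hdV2⟩ := hbd
    rcases mem_unionPart.1 hV1 with ⟨X, hX, rfl⟩ | ⟨Y, hY, rfl⟩ <;>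
      rcases mem_unionPart.1 hV2 with ⟨X', hX', rfl⟩ | ⟨Y', hY', rfl⟩
    · -- both unbarred
      rcases interl_cases a with ⟨a0, rfl⟩ | ⟨a0, rfl⟩
      swap; · exact absurd haV1 bb_not_mem_unbar
      rcases interl_cases b with ⟨b0, rfl⟩ | ⟨b0, rfl⟩
      swap; · exact absurd hbV2 bb_not_mem_unbar
      rcases interl_cases c with ⟨c0, rfl⟩ | ⟨c0, rfl⟩
      swap; · exact absurd hcV1 bb_not_mem_unbar
      rcases interl_cases d with ⟨d0, rfl⟩ | ⟨d0, rfl⟩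
      swap; · exact absurd hdV2 bb_not_mem_unbar
      rw [ub_lt_ub] at hab hbc hcd
      obtain ⟨E, hE, ha0, hb0⟩ := hnc a0 b0 c0 d0 hab hbc hcd
        ⟨X, hX, mem_unbar.1 haV1, mem_unbar.1 hcV1⟩ ⟨X', hX', mem_unbar.1 hbV2, mem_unbar.1 hdV2⟩
      exact ⟨unbar E, mem_unionPart.2 (Or.inl ⟨E, hE, rfl⟩), mem_unbar.2 ha0, mem_unbar.2 hb0⟩
    · -- (a,c) unbarred in X, (b,d) barred in Y'
      exfalso
      rcases interl_cases a with ⟨a0, rfl⟩ | ⟨a0, rfl⟩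
      swap; · exact bb_not_mem_unbar haV1
      rcases interl_cases c with ⟨c0, rfl⟩ | ⟨c0, rfl⟩
      swap; · exact bb_not_mem_unbar hcV1
      rcases interl_cases b with ⟨b0, rfl⟩ | ⟨b0, rfl⟩
      · exact ub_not_mem_barred hbV2
      rcases interl_cases d with ⟨d0, rfl⟩ | ⟨d0, rfl⟩
      · exact ub_not_mem_barred hdV2
      rw [ub_lt_bb] at hab hcd
      rw [bb_lt_ub] at hbc
      have hrel : rel p b0 d0 := rel_of_mem_qExp hY' (mem_barred.1 hbV2) (mem_barred.1 hdV2)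
      have hb0d0 : b0 ≤ d0 := le_trans (le_of_lt hbc) hcd
      rcases rel_Ioc hb0d0 hrel X hX with hsub | hdisj
      · have : a0 ∈ Finset.Ioc b0 d0 := hsub (mem_unbar.1 haV1)
        exact absurd hab (not_le.2 (Finset.mem_Ioc.1 this).1)
      · exact Finset.disjoint_left.1 hdisj (mem_unbar.1 hcV1) (Finset.mem_Ioc.2 ⟨hbc, hcd⟩)
    · -- (a,c) barred in Y, (b,d) unbarred in X'
      exfalso
      rcases interl_cases a with ⟨a0, rfl⟩ | ⟨a0, rfl⟩
      · exact ub_not_mem_barred haV1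
      rcases interl_cases c with ⟨c0, rfl⟩ | ⟨c0, rfl⟩
      · exact ub_not_mem_barred hcV1
      rcases interl_cases b with ⟨b0, rfl⟩ | ⟨b0, rfl⟩
      swap; · exact bb_not_mem_unbar hbV2
      rcases interl_cases d with ⟨d0, rfl⟩ | ⟨d0, rfl⟩
      swap; · exact bb_not_mem_unbar hdV2
      rw [bb_lt_ub] at hab hcd
      rw [ub_lt_bb] at hbc
      have hrel : rel p a0 c0 := rel_of_mem_qExp hY (mem_barred.1 haV1) (mem_barred.1 hcV1)
      have ha0c0 : a0 ≤ c0 := le_trans (le_of_lt hab) hbc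
      rcases rel_Ioc ha0c0 hrel X' hX' with hsub | hdisj
      · have : d0 ∈ Finset.Ioc a0 c0 := hsub (mem_unbar.1 hdV2)
        exact absurd hcd (not_lt.2 (Finset.mem_Ioc.1 this).2)
      · exact Finset.disjoint_left.1 hdisj (mem_unbar.1 hbV2) (Finset.mem_Ioc.2 ⟨hab, hbc⟩)
    · -- both barred
      rcases interl_cases a with ⟨a0, rfl⟩ | ⟨a0, rfl⟩
      · exact absurd haV1 ub_not_mem_barred
      rcases interl_cases b with ⟨b0, rfl⟩ | ⟨b0, rfl⟩
      · exact absurd hbV2 ub_not_mem_barred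
      rcases interl_cases c with ⟨c0, rfl⟩ | ⟨c0, rfl⟩
      · exact absurd hcV1 ub_not_mem_barred
      rcases interl_cases d with ⟨d0, rfl⟩ | ⟨d0, rfl⟩
      · exact absurd hdV2 ub_not_mem_barred
      rw [bb_lt_bb] at hab hbc hcd
      have hrel1 : rel p a0 c0 := rel_of_mem_qExp hY (mem_barred.1 haV1) (mem_barred.1 hcV1)
      have hrel2 : rel p b0 d0 := rel_of_mem_qExp hY' (mem_barred.1 hbV2) (mem_barred.1 hdV2)
      have hab' : rel p a0 b0 := by
        apply rel_of_Ioc (le_of_lt hab)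
        have hioc : Finset.Ioc a0 b0 = Finset.Ioc a0 c0 \ Finset.Ioc b0 d0 := by
          ext x
          simp only [Finset.mem_Ioc, Finset.mem_sdiff, not_and, not_le, Fin.lt_def, Fin.le_def]
          have h1 := Fin.lt_def.1 hab
          have h2 := Fin.lt_def.1 hbc
          have h3 := Fin.lt_def.1 hcd
          omega
        rw [hioc]
        exact UB.sdiff (rel_Ioc (le_of_lt (lt_trans hab hbc)) hrel1)
          (rel_Ioc (le_of_lt (lt_trans hbc hcd)) hrel2)
      refine ⟨barred (classOf p a0), mem_unionPart.2 (Or.inr ⟨classOf p a0, classOf_mem_qExp a0, rfl⟩),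
        mem_barred.2 (mem_classOf.2 (rel_refl a0)), mem_barred.2 (mem_classOf.2 hab')⟩
  · -- maximality
    intro q' hq' hncq' C hC
    obtain ⟨x0, hx0⟩ := hq'.1 C hC
    refine ⟨classOf p x0, classOf_mem_qExp x0, ?_⟩
    have aux : ∀ x ∈ C, ∀ y ∈ C, x < y → rel p x y := by
      intro x hx y hy hxy
      apply rel_of_Ioc (le_of_lt hxy)
      intro B hB
      by_cases hdisj : Disjoint B (Finset.Ioc x y)
      · exact Or.inr hdisj
      left
      rw [Finset.not_disjoint_iff] at hdisj
      obtain ⟨u, huB, huI⟩ := hdisj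
      rw [Finset.mem_Ioc] at huI
      intro d hdB
      rw [Finset.mem_Ioc]
      by_contra hdI
      rw [not_and_or, not_lt, not_le] at hdI
      rcases hdI with hle | hgt
      · -- d ≤ x : crossing (ub d, bb x, ub u, bb y)
        obtain ⟨E, hE, h1, h2⟩ := hncq' (ub d) (bb x) (ub u) (bb y)
          (ub_lt_bb.2 hle) (bb_lt_ub.2 huI.1) (ub_lt_bb.2 huI.2)
          ⟨unbar B, mem_unionPart.2 (Or.inl ⟨B, hB, rfl⟩), mem_unbar.2 hdB, mem_unbar.2 huB⟩
          ⟨barred C, mem_unionPart.2 (Or.inr ⟨C, hC, rfl⟩), mem_barred.2 hx, mem_barred.2 hy⟩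
        exact no_mixed_block hE h1 h2
      · -- d > y : crossing (bb x, ub u, bb y, ub d)
        obtain ⟨E, hE, h1, h2⟩ := hncq' (bb x) (ub u) (bb y) (ub d)
          (bb_lt_ub.2 huI.1) (ub_lt_bb.2 huI.2) (bb_lt_ub.2 hgt)
          ⟨barred C, mem_unionPart.2 (Or.inr ⟨C, hC, rfl⟩), mem_barred.2 hx, mem_barred.2 hy⟩
          ⟨unbar B, mem_unionPart.2 (Or.inl ⟨B, hB, rfl⟩), mem_unbar.2 huB, mem_unbar.2 hdB⟩
        exact no_mixed_block hE h2 h1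
    intro y hy
    rw [mem_classOf]
    rcases lt_trichotomy x0 y with h | h | h
    · exact aux x0 hx0 y hy h
    · exact h ▸ rel_refl x0
    · exact rel_symm (aux y hy x0 hx0 h)

theorem kr_eq_qExp {p : Finset (Finset (Fin m))} (hp : IsPartition p)
    (hnc : IsNonCrossing p) : kr p = qExp p := by
  have hex : ∃ q, IsKr p q := ⟨qExp p, isKr_qExp hp hnc⟩
  have hchoose := hex.choose_spec
  have hqe := isKr_qExp hp hnc
  have : hex.choose = qExp p := by
    apply refines_antisymm hchoose.1 hqe.1
    · exact hqe.2.2 _ hchoose.1 hchoose.2.1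
    · exact hchoose.2.2 _ hqe.1 hqe.2.1
  rw [kr, dif_pos hex, this]

lemma isKr_kr {p : Finset (Finset (Fin m))} (hp : IsPartition p)
    (hnc : IsNonCrossing p) : IsKr p (kr p) := by
  rw [kr_eq_qExp hp hnc]; exact isKr_qExp hp hnc

/-- `q` inherits non-crossing (as a partition of the barred line) from `p ∪ q`. -/
lemma nc_of_unionPart_barred {p q : Finset (Finset (Fin m))}
    (h : IsNonCrossing (unionPart p q)) : IsNonCrossing q := by
  intro a b c d hab hbc hcd hac hbd
  obtain ⟨B1, hB1, ha1, hc1⟩ := hac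
  obtain ⟨B2, hB2, hb2, hd2⟩ := hbd
  obtain ⟨E, hE, h1, h2⟩ := h (bb a) (bb b) (bb c) (bb d)
    (bb_lt_bb.2 hab) (bb_lt_bb.2 hbc) (bb_lt_bb.2 hcd)
    ⟨barred B1, mem_unionPart.2 (Or.inr ⟨B1, hB1, rfl⟩), mem_barred.2 ha1, mem_barred.2 hc1⟩
    ⟨barred B2, mem_unionPart.2 (Or.inr ⟨B2, hB2, rfl⟩), mem_barred.2 hb2, mem_barred.2 hd2⟩
  rcases mem_unionPart.1 hE with ⟨X, _, rfl⟩ | ⟨Y, hY, rfl⟩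
  · exact absurd h1 bb_not_mem_unbar
  · exact ⟨Y, hY, mem_barred.1 h1, mem_barred.1 h2⟩

end InterlSec

section RedSec
variable {k n : ℕ}

lemma red_val (x : Fin ((k+1)*n)) : (red x).val = x.val % n := rfl

lemma fiber_card (hn : 0 < n) (r : Fin n) :
    (Finset.univ.filter (fun x : Fin ((k+1)*n) => red x = r)).card = k + 1 := by
  have key : (Finset.univ : Finset (Fin (k+1))).card
      = (Finset.univ.filter (fun x : Fin ((k+1)*n) => red x = r)).card := by
    apply Finset.card_bij (fun (t : Fin (k+1)) _ =>
      (⟨t.val * n + r.val, by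
        have h1 := t.isLt
        have h2 := r.isLt
        calc t.val * n + r.val < t.val * n + n := by omega
          _ = (t.val + 1) * n := by ring
          _ ≤ (k + 1) * n := Nat.mul_le_mul_right n (by omega)⟩ : Fin ((k+1)*n)))
    · intro t _
      simp only [Finset.mem_filter, Finset.mem_univ, true_and]
      apply Fin.ext
      rw [red_val]
      show (t.val * n + r.val) % n = r.val
      rw [Nat.add_comm, Nat.add_mul_mod_self_right, Nat.mod_eq_of_lt r.isLt]
    · intro s _ t _ h
      have : s.val * n + r.val = t.val * n + r.val := congrArg Fin.val h
      have hst : s.val * n = t.val * n := by omega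
      exact Fin.ext (Nat.eq_of_mul_eq_mul_right hn hst)
    · intro x hx
      simp only [Finset.mem_filter, Finset.mem_univ, true_and] at hx
      have hxr : x.val % n = r.val := congrArg Fin.val hx
      have hdiv : x.val / n < k + 1 := by
        rw [Nat.div_lt_iff_lt_mul hn]
        exact x.isLt
      refine ⟨⟨x.val / n, hdiv⟩, Finset.mem_univ _, ?_⟩
      apply Fin.ext
      show x.val / n * n + r.val = x.val
      rw [← hxr]
      exact Nat.div_add_mod' x.val n
  rw [← key]
  simp


variable {π : Finset (Finset (Fin ((k+1)*n)))}

lemma mem_redPart {W : Finset (Fin n)} : W ∈ redPart π ↔ ∃ B ∈ π, W = B.image red := by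
  unfold redPart
  simp only [Finset.mem_image]
  exact ⟨fun ⟨B, hB, h⟩ => ⟨B, hB, h.symm⟩, fun ⟨B, hB, h⟩ => ⟨B, hB, h.symm⟩⟩

lemma redPart_nonempty (hπ : IsPartition π) {W : Finset (Fin n)} (hW : W ∈ redPart π) :
    W.Nonempty := by
  obtain ⟨B, hB, rfl⟩ := mem_redPart.1 hW
  exact (hπ.1 B hB).image red

lemma blocks_to_W_sum (hn : 0 < n) (hπ : IsPartition π) (hR : IsPartition (redPart π))
    {W : Finset (Fin n)} (hW : W ∈ redPart π) :
    ∑ B ∈ π.filter (fun B => B.image red = W), B.card = (k+1) * W.card := by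
  classical
  have hdisj : ∀ B1 ∈ π.filter (fun B => B.image red = W),
      ∀ B2 ∈ π.filter (fun B => B.image red = W), B1 ≠ B2 → Disjoint (id B1) (id B2) := by
    intro B1 h1 B2 h2 hne
    rw [Finset.disjoint_left]
    intro x hx1 hx2
    exact hne (part_unique hπ (Finset.mem_filter.1 h1).1 (Finset.mem_filter.1 h2).1 hx1 hx2)
  have hU : (π.filter (fun B => B.image red = W)).biUnion id
      = Finset.univ.filter (fun x => red x ∈ W) := by
    ext x
    simp only [Finset.mem_biUnion, Finset.mem_filter, Finset.mem_univ, true_and, id]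
    constructor
    · rintro ⟨B, hB, hxB⟩
      rw [← hB.2]
      exact Finset.mem_image_of_mem red hxB
    · intro hx
      obtain ⟨B, hB, hxB⟩ := part_blockOf hπ x
      refine ⟨B, ⟨hB, ?_⟩, hxB⟩
      have h1 : B.image red ∈ redPart π := mem_redPart.2 ⟨B, hB, rfl⟩
      exact part_unique hR h1 hW (Finset.mem_image_of_mem red hxB) hx
  have h1 := Finset.card_biUnion hdisj
  rw [hU] at h1
  have h2 : Finset.univ.filter (fun x : Fin ((k+1)*n) => red x ∈ W)
      = W.biUnion (fun r => Finset.univ.filter (fun x => red x = r)) := by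
    ext x
    simp only [Finset.mem_biUnion, Finset.mem_filter, Finset.mem_univ, true_and]
    exact ⟨fun h => ⟨red x, h, rfl⟩, fun ⟨r, hr, h⟩ => h ▸ hr⟩
  have h3 : ∀ r1 ∈ W, ∀ r2 ∈ W, r1 ≠ r2 →
      Disjoint (Finset.univ.filter (fun x : Fin ((k+1)*n) => red x = r1))
        (Finset.univ.filter (fun x => red x = r2)) := by
    intro r1 _ r2 _ hne
    rw [Finset.disjoint_left]
    intro x hx1 hx2
    simp only [Finset.mem_filter, Finset.mem_univ, true_and] at hx1 hx2
    exact hne (hx1 ▸ hx2 ▸ rfl)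
  rw [h2, Finset.card_biUnion h3] at h1
  simp only [fiber_card hn] at h1
  rw [Finset.sum_const, smul_eq_mul] at h1
  simp only [id] at h1
  rw [← h1, Nat.mul_comm]

lemma cnt_le (hn : 0 < n) (hπ : IsPartition π) (hR : IsPartition (redPart π))
    {W : Finset (Fin n)} (hW : W ∈ redPart π) :
    (π.filter (fun B => B.image red = W)).card ≤ k + 1 := by
  have hWpos : 0 < W.card := Finset.card_pos.2 (redPart_nonempty hπ hW)
  have hsum := blocks_to_W_sum hn hπ hR hW
  have hle : (π.filter (fun B => B.image red = W)).card * W.card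
      ≤ ∑ B ∈ π.filter (fun B => B.image red = W), B.card := by
    calc (π.filter (fun B => B.image red = W)).card * W.card
        = ∑ _B ∈ π.filter (fun B => B.image red = W), W.card := by
          rw [Finset.sum_const, smul_eq_mul]
      _ ≤ ∑ B ∈ π.filter (fun B => B.image red = W), B.card := by
          apply Finset.sum_le_sum
          intro B hB
          rw [← (Finset.mem_filter.1 hB).2]
          exact Finset.card_image_le
  rw [hsum] at hle
  exact Nat.le_of_mul_le_mul_right hle hWpos

lemma card_part_eq_sum_cnt :
    π.card = ∑ W ∈ redPart π, (π.filter (fun B => B.image red = W)).card :=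
  Finset.card_eq_sum_card_fiberwise (fun B hB => mem_redPart.2 ⟨B, hB, rfl⟩)

end RedSec

section StarSec
variable {k n : ℕ} {π : Finset (Finset (Fin ((k+1)*n)))}

/-- `u` lies in the `t`-th copy of the residue interval `(i, j]`. -/
def inI (i j : Fin n) (t : ℕ) (u : Fin ((k+1)*n)) : Prop :=
  t * n + i.val < u.val ∧ u.val ≤ t * n + j.val

/-- two copies are linked if some block meets both -/
def link (π : Finset (Finset (Fin ((k+1)*n)))) (i j : Fin n) (s t : ℕ) : Prop :=
  s ≤ k ∧ t ≤ k ∧ ∃ B ∈ π, (∃ u ∈ B, inI i j s u) ∧ (∃ v ∈ B, inI i j t v)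

lemma link_symm {i j : Fin n} {s t : ℕ} (h : link π i j s t) : link π i j t s := by
  obtain ⟨h1, h2, B, hB, hu, hv⟩ := h
  exact ⟨h2, h1, B, hB, hv, hu⟩

lemma reach_le {i j : Fin n} {t : ℕ} (h : Relation.ReflTransGen (link π i j) k t) : t ≤ k := by
  induction h with
  | refl => exact le_refl k
  | tail _ h2 _ => exact h2.2.1

lemma inI_red {i j : Fin n} {t : ℕ} {u : Fin ((k+1)*n)} (hij : i < j) (h : inI i j t u) :
    i < red u ∧ red u ≤ j := by
  obtain ⟨h1, h2⟩ := h
  have hjn := j.isLt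
  have hin := i.isLt
  have hd : u.val - t * n < n := by omega
  have hmod : u.val % n = u.val - t * n := by
    have heq : u.val = (u.val - t * n) + t * n := by omega
    conv_lhs => rw [heq]
    rw [Nat.add_mul_mod_self_right, Nat.mod_eq_of_lt hd]
  constructor
  · rw [Fin.lt_def, red_val, hmod]; omega
  · rw [Fin.le_def, red_val, hmod]; omega

lemma red_inI {i j : Fin n} {u : Fin ((k+1)*n)} (hn : 0 < n)
    (hiu : i < red u) (huj : red u ≤ j) :
    inI i j (u.val / n) u ∧ u.val / n ≤ k := by
  have h1 : u.val / n * n + u.val % n = u.val := Nat.div_add_mod' u.val n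
  have h2 : i.val < u.val % n := by rw [Fin.lt_def, red_val] at hiu; exact hiu
  have h3 : u.val % n ≤ j.val := by rw [Fin.le_def, red_val] at huj; exact huj
  refine ⟨⟨by omega, by omega⟩, ?_⟩
  have := u.isLt
  have : u.val / n < k + 1 := by
    rw [Nat.div_lt_iff_lt_mul hn]
    exact u.isLt
  omega

/-- cut lemma -/
lemma cut_lemma {i j : Fin n} {w c : ℕ}
    (hw : Relation.ReflTransGen (link π i j) k w) (hwc : w ≤ c) (hck : c < k) :
    ∃ p q, Relation.ReflTransGen (link π i j) k p ∧ Relation.ReflTransGen (link π i j) k q ∧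
      link π i j p q ∧ p ≤ c ∧ c < q := by
  induction hw with
  | refl => omega
  | @tail b w' hkb hbw ih =>
    by_cases hb : b ≤ c
    · exact ih hb
    · push_neg at hb
      exact ⟨w', b, Relation.ReflTransGen.tail hkb hbw, hkb, link_symm hbw, hwc, hb⟩

lemma mul_le_helper {a b : ℕ} (n : ℕ) (h : a ≤ b) : a * n ≤ b * n := Nat.mul_le_mul_right n h

theorem star (hn : 0 < n) (hπ : IsPartition π) (hnc : IsNonCrossing π)
    (hR : IsPartition (redPart π)) {i j : Fin n} (hij : i < j)
    (hUB : UB (redPart π) (Finset.Ioc i j)) :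
    ∃ x y : Fin ((k+1)*n), red x = i ∧ red y = j ∧ x < y ∧ UB π (Finset.Ioc x y) := by
  classical
  have hjn := j.isLt
  have hin := i.isLt
  have hijv : i.val < j.val := hij
  set L := link π i j with hL
  set FA : Finset ℕ := (Finset.range (k+1)).filter (fun t => Relation.ReflTransGen L k t) with hFA
  have hkFA : k ∈ FA := by
    rw [hFA, Finset.mem_filter, Finset.mem_range]
    exact ⟨by omega, Relation.ReflTransGen.refl⟩
  have hFAne : FA.Nonempty := ⟨k, hkFA⟩
  set a := FA.min' hFAne with ha
  have haFA : a ∈ FA := FA.min'_mem hFAne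
  have haR : Relation.ReflTransGen L k a := (Finset.mem_filter.1 haFA).2
  have hak : a ≤ k := reach_le haR
  have hminFA : ∀ t, Relation.ReflTransGen L k t → a ≤ t := by
    intro t ht
    apply FA.min'_le
    rw [hFA, Finset.mem_filter, Finset.mem_range]
    exact ⟨by have := reach_le ht; omega, ht⟩
  -- the endpoints
  have hxbound : a * n + i.val < (k+1) * n := by
    have := mul_le_helper n hak
    have hn1 : (k+1)*n = k*n + n := by ring
    omega
  have hybound : k * n + j.val < (k+1) * n := by
    have hn1 : (k+1)*n = k*n + n := by ring
    omega
  set x : Fin ((k+1)*n) := ⟨a * n + i.val, hxbound⟩ with hx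
  set y : Fin ((k+1)*n) := ⟨k * n + j.val, hybound⟩ with hy
  have hredx : red x = i := by
    apply Fin.ext
    rw [red_val]
    show (a * n + i.val) % n = i.val
    rw [Nat.add_comm, Nat.add_mul_mod_self_right, Nat.mod_eq_of_lt hin]
  have hredy : red y = j := by
    apply Fin.ext
    rw [red_val]
    show (k * n + j.val) % n = j.val
    rw [Nat.add_comm, Nat.add_mul_mod_self_right, Nat.mod_eq_of_lt hjn]
  have hxy : x < y := by
    rw [Fin.lt_def]
    show a * n + i.val < k * n + j.val
    have := mul_le_helper n hak
    omega
  refine ⟨x, y, hredx, hredy, hxy, ?_⟩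
  -- main part
  intro B hB
  by_cases hdisj : Disjoint B (Finset.Ioc x y)
  · exact Or.inr hdisj
  left
  rw [Finset.not_disjoint_iff] at hdisj
  obtain ⟨u0, hu0B, hu0I⟩ := hdisj
  rw [Finset.mem_Ioc] at hu0I
  have hu0x : a * n + i.val < u0.val := hu0I.1
  have hu0y : u0.val ≤ k * n + j.val := hu0I.2
  -- dichotomy on B via the reduced partition
  have hWmem : B.image red ∈ redPart π := mem_redPart.2 ⟨B, hB, rfl⟩
  rcases hUB (B.image red) hWmem with hBin | hBout
  · -- Case A : all residues of B in (i, j]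
    have hall : ∀ b ∈ B, i < red b ∧ red b ≤ j := by
      intro b hb
      have : red b ∈ Finset.Ioc i j := hBin (Finset.mem_image_of_mem red hb)
      rw [Finset.mem_Ioc] at this
      exact this
    obtain ⟨hu0red1, hu0red2⟩ := hall u0 hu0B
    obtain ⟨hinI0, ht0k⟩ := red_inI hn hu0red1 hu0red2
    set t0 := u0.val / n with ht0
    have ht0a : a ≤ t0 := by
      by_contra hcon
      push_neg at hcon
      have h1 : (t0+1) * n ≤ a * n := mul_le_helper n (by omega)
      have h2 : (t0+1)*n = t0*n + n := by ring
      have := hinI0.2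
      omega
    intro v hvB
    rw [Finset.mem_Ioc, Fin.lt_def, Fin.le_def]
    obtain ⟨hvred1, hvred2⟩ := hall v hvB
    obtain ⟨hinIv, htvk⟩ := red_inI hn hvred1 hvred2
    set tv := v.val / n with htv
    constructor
    · -- x < v
      show a * n + i.val < v.val
      by_cases htva : a ≤ tv
      · have := mul_le_helper n htva
        have := hinIv.1
        omega
      push_neg at htva
      exfalso
      have hlink : L t0 tv := ⟨ht0k, htvk, B, hB, ⟨u0, hu0B, hinI0⟩, ⟨v, hvB, hinIv⟩⟩
      by_cases hA0 : Relation.ReflTransGen L k t0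
      · have : Relation.ReflTransGen L k tv := Relation.ReflTransGen.tail hA0 hlink
        exact absurd (hminFA tv this) (by omega)
      · have ht0k' : t0 < k := by
          rcases Nat.lt_or_ge t0 k with h | h
          · exact h
          · have : t0 = k := by omega
            rw [this] at hA0
            exact absurd Relation.ReflTransGen.refl hA0
        have ht0a' : a < t0 := by
          rcases Nat.lt_or_ge a t0 with h | h
          · exact h
          · have : t0 = a := by omega
            rw [this] at hA0
            exact absurd haR hA0
        obtain ⟨p, q, hpR, hqR, hpq, hpc, hcq⟩ := cut_lemma haR (le_of_lt ht0a') ht0k'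
        have hap : a ≤ p := hminFA p hpR
        have hqk : q ≤ k := reach_le hqR
        have hpt0 : p < t0 := by
          rcases Nat.lt_or_ge p t0 with h | h
          · exact h
          · have : p = t0 := by omega
            rw [this] at hpR
            exact absurd hpR hA0
        obtain ⟨_, _, B2, hB2, ⟨γ, hγB2, hγI⟩, ⟨δ, hδB2, hδI⟩⟩ := hpq
        -- v < γ < u0 < δ
        have hvγ : v.val < γ.val := by
          have h1 : (tv+1)*n ≤ p*n := mul_le_helper n (by omega)
          have h2 : (tv+1)*n = tv*n + n := by ring
          have := hinIv.2
          have := hγI.1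
          omega
        have hγu0 : γ.val < u0.val := by
          have h1 : (p+1)*n ≤ t0*n := mul_le_helper n (by omega)
          have h2 : (p+1)*n = p*n + n := by ring
          have := hγI.2
          have := hinI0.1
          omega
        have hu0δ : u0.val < δ.val := by
          have h1 : (t0+1)*n ≤ q*n := mul_le_helper n (by omega)
          have h2 : (t0+1)*n = t0*n + n := by ring
          have := hinI0.2
          have := hδI.1
          omega
        obtain ⟨E, hE, hvE, hγE⟩ := hnc v γ u0 δ (Fin.lt_def.2 hvγ) (Fin.lt_def.2 hγu0)
          (Fin.lt_def.2 hu0δ) ⟨B, hB, hvB, hu0B⟩ ⟨B2, hB2, hγB2, hδB2⟩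
        have hEB : E = B := part_unique hπ hE hB hvE hvB
        have hEB2 : E = B2 := part_unique hπ hE hB2 hγE hγB2
        have hBB2 : B = B2 := hEB ▸ hEB2
        -- then B meets I_q via δ and I_tv via v: link q tv
        have hlink2 : L q tv := ⟨hqk, htvk, B, hB, ⟨δ, hBB2 ▸ hδB2, hδI⟩, ⟨v, hvB, hinIv⟩⟩
        have : Relation.ReflTransGen L k tv := Relation.ReflTransGen.tail hqR hlink2
        exact absurd (hminFA tv this) (by omega)
    · -- v ≤ y
      show v.val ≤ k * n + j.val
      have h1 : tv * n ≤ k * n := mul_le_helper n htvk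
      have := hinIv.2
      omega
  · -- Case B : all residues of B outside (i, j]
    have hall : ∀ b ∈ B, ¬(i < red b ∧ red b ≤ j) := by
      intro b hb hcon
      exact (Finset.disjoint_left.1 hBout) (Finset.mem_image_of_mem red hb)
        (Finset.mem_Ioc.2 ⟨hcon.1, hcon.2⟩)
    -- find the gap index t : a ≤ t < k and t*n+j < u0 ≤ (t+1)*n+i
    obtain ⟨t, hat, htk, hgap1, hgap2⟩ :
        ∃ t, a ≤ t ∧ t < k ∧ t * n + j.val < u0.val ∧ u0.val ≤ (t+1) * n + i.val := by
      set t0 := u0.val / n with ht0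
      set r := u0.val % n with hr
      have hrn : r < n := Nat.mod_lt _ hn
      have hdm : t0 * n + r = u0.val := Nat.div_add_mod' u0.val n
      have ht0k : t0 ≤ k := by
        have : u0.val / n < k + 1 := by
          rw [Nat.div_lt_iff_lt_mul hn]; exact u0.isLt
        omega
      have hcases : r ≤ i.val ∨ j.val < r := by
        have := hall u0 hu0B
        rw [Fin.lt_def, Fin.le_def, red_val, ← hr] at this
        omega
      rcases hcases with hri | hjr
      · -- r ≤ i : t := t0 - 1
        have ht01 : 1 ≤ t0 := by
          by_contra hcon
          push_neg at hcon
          interval_cases t0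
          omega
        refine ⟨t0 - 1, ?_, ?_, ?_, ?_⟩
        · -- a ≤ t0 - 1
          have : a * n < t0 * n := by omega
          have : a < t0 := by
            by_contra hcon
            push_neg at hcon
            exact absurd (mul_le_helper n hcon) (by omega)
          omega
        · omega
        · have heq : (t0 - 1) * n + n = t0 * n := by
            have : t0 - 1 + 1 = t0 := by omega
            calc (t0-1)*n + n = (t0 - 1 + 1) * n := by ring
              _ = t0 * n := by rw [this]
          omega
        · have heq : (t0 - 1 + 1) = t0 := by omega
          rw [heq]
          omega
      · -- j < r : t := t0
        have ht0k' : t0 < k := by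
          rcases Nat.lt_or_ge t0 k with h | h
          · exact h
          · exfalso
            have : t0 = k := by omega
            rw [this] at hdm
            omega
        refine ⟨t0, ?_, ht0k', by omega, ?_⟩
        · by_contra hcon
          push_neg at hcon
          have h1 : (t0+1) * n ≤ a * n := mul_le_helper n (by omega)
          have h2 : (t0+1)*n = t0*n + n := by ring
          omega
        · have h2 : (t0+1)*n = t0*n + n := by ring
          omega
    obtain ⟨p, q, hpR, hqR, hpq, hpc, hcq⟩ := cut_lemma haR hat htk
    have hap : a ≤ p := hminFA p hpR
    have hqk : q ≤ k := reach_le hqR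
    obtain ⟨_, _, B2, hB2, ⟨γ, hγB2, hγI⟩, ⟨δ, hδB2, hδI⟩⟩ := hpq
    have hγu0 : γ.val < u0.val := by
      have h1 : p * n ≤ t * n := mul_le_helper n hpc
      have := hγI.2
      omega
    have hu0δ : u0.val < δ.val := by
      have h1 : (t+1) * n ≤ q * n := mul_le_helper n (by omega)
      have := hδI.1
      omega
    have hBB2 : B ≠ B2 := by
      intro hcon
      apply hall γ (hcon ▸ hγB2)
      exact inI_red hij hγI
    intro v hvB
    rw [Finset.mem_Ioc, Fin.lt_def, Fin.le_def]
    by_contra hcon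
    rw [not_and_or, not_lt, not_le] at hcon
    rcases hcon with hvx | hvy
    · -- v ≤ x : crossing (v, γ, u0, δ)
      have hvγ : v.val < γ.val := by
        have h1 : a * n ≤ p * n := mul_le_helper n hap
        have := hγI.1
        show v.val < γ.val
        have hvx' : v.val ≤ a * n + i.val := hvx
        omega
      obtain ⟨E, hE, hvE, hγE⟩ := hnc v γ u0 δ (Fin.lt_def.2 hvγ) (Fin.lt_def.2 hγu0)
        (Fin.lt_def.2 hu0δ) ⟨B, hB, hvB, hu0B⟩ ⟨B2, hB2, hγB2, hδB2⟩
      have hEB : E = B := part_unique hπ hE hB hvE hvB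
      have hEB2 : E = B2 := part_unique hπ hE hB2 hγE hγB2
      exact hBB2 (hEB ▸ hEB2)
    · -- v > y : crossing (γ, u0, δ, v)
      have hδv : δ.val < v.val := by
        have h1 : q * n ≤ k * n := mul_le_helper n hqk
        have := hδI.2
        show δ.val < v.val
        have : k * n + j.val < v.val := hvy
        omega
      obtain ⟨E, hE, hγE, hu0E⟩ := hnc γ u0 δ v (Fin.lt_def.2 hγu0) (Fin.lt_def.2 hu0δ)
        (Fin.lt_def.2 hδv) ⟨B2, hB2, hγB2, hδB2⟩ ⟨B, hB, hu0B, hvB⟩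
      have hEB : E = B := part_unique hπ hE hB hu0E hu0B
      have hEB2 : E = B2 := part_unique hπ hE hB2 hγE hγB2
      exact hBB2 (hEB ▸ hEB2)

end StarSec

section WalkSec
variable {n : ℕ}

/-- cyclically strictly between `u` and `v` -/
def betw (u w v : Fin n) : Prop := if u < v then (u < w ∧ w < v) else (u < w ∨ w < v)

/-- `v` is the cyclic successor of `u` within `W` -/
def SuccStep (W : Finset (Fin n)) (u v : Fin n) : Prop :=
  u ∈ W ∧ v ∈ W ∧ ∀ w ∈ W, ¬ betw u w v

noncomputable def idxW (W : Finset (Fin n)) (w : Fin n) : ℕ :=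
  (W.filter (fun z => z < w)).card

lemma idx_lt_card {W : Finset (Fin n)} {u : Fin n} (hu : u ∈ W) : idxW W u < W.card := by
  apply Finset.card_lt_card
  constructor
  · exact Finset.filter_subset _ _
  · intro hsub
    have := hsub hu
    simp only [Finset.mem_filter] at this
    exact absurd this.2 (lt_irrefl u)

lemma succStep_idx {W : Finset (Fin n)} {u v : Fin n} (h : SuccStep W u v) :
    idxW W v = (idxW W u + 1) % W.card := by
  obtain ⟨hu, hv, hmid⟩ := h
  rcases lt_trichotomy u v with huv | huv | huv
  · -- u < v, no wrap
    have hfil : W.filter (fun z => z < v) = insert u (W.filter (fun z => z < u)) := by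
      ext z
      simp only [Finset.mem_filter, Finset.mem_insert]
      constructor
      · rintro ⟨hzW, hzv⟩
        rcases lt_trichotomy z u with h | h | h
        · exact Or.inr ⟨hzW, h⟩
        · exact Or.inl h
        · exfalso
          exact hmid z hzW (by rw [betw, if_pos huv]; exact ⟨h, hzv⟩)
      · rintro (rfl | ⟨hzW, hzu⟩)
        · exact ⟨hu, huv⟩
        · exact ⟨hzW, lt_trans hzu huv⟩
    have hnotin : u ∉ W.filter (fun z => z < u) := by
      simp only [Finset.mem_filter]
      rintro ⟨_, h⟩
      exact absurd h (lt_irrefl u)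
    have : idxW W v = idxW W u + 1 := by
      rw [idxW, hfil, Finset.card_insert_of_notMem hnotin]; rfl
    rw [this, Nat.mod_eq_of_lt]
    rw [← this]
    exact idx_lt_card hv
  · -- u = v : W = {u}
    subst huv
    have hW : W = {u} := by
      apply Finset.eq_singleton_iff_unique_mem.2
      refine ⟨hu, ?_⟩
      intro w hw
      by_contra hne
      apply hmid w hw
      rw [betw, if_neg (lt_irrefl u)]
      rcases lt_or_gt_of_ne hne with h | h
      · exact Or.inr h
      · exact Or.inl h
    subst hW
    simp [idxW, Finset.filter_singleton]
  · -- v < u : wrap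
    have hmax : ∀ w ∈ W, w ≤ u := by
      intro w hw
      by_contra hcon
      push_neg at hcon
      exact hmid w hw (by rw [betw, if_neg (not_lt.2 (le_of_lt huv))]; exact Or.inl hcon)
    have hminv : ∀ w ∈ W, v ≤ w := by
      intro w hw
      by_contra hcon
      push_neg at hcon
      exact hmid w hw (by rw [betw, if_neg (not_lt.2 (le_of_lt huv))]; exact Or.inr hcon)
    have h1 : idxW W v = 0 := by
      rw [idxW, Finset.card_eq_zero]
      apply Finset.filter_false_of_mem
      intro w hw
      exact not_lt.2 (hminv w hw)
    have h2 : idxW W u = W.card - 1 := by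
      rw [idxW]
      have : W.filter (fun z => z < u) = W.erase u := by
        ext z
        simp only [Finset.mem_filter, Finset.mem_erase]
        constructor
        · rintro ⟨hz, hlt⟩
          exact ⟨ne_of_lt hlt, hz⟩
        · rintro ⟨hne, hz⟩
          exact ⟨hz, lt_of_le_of_ne (hmax z hz) hne⟩
      rw [this, Finset.card_erase_of_mem hu]
    have hc : 1 ≤ W.card := Finset.card_pos.2 ⟨u, hu⟩
    rw [h1, h2]
    have : W.card - 1 + 1 = W.card := by omega
    rw [this, Nat.mod_self]

lemma mod_succ_helper (a c : ℕ) : (a % c + 1) % c = (a + 1) % c := by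
  conv_rhs => rw [Nat.add_mod]
  conv_lhs => rw [Nat.add_mod]
  rw [Nat.mod_mod_of_dvd a (dvd_refl c)]

theorem walk_dvd {N : ℕ} (B : Finset (Fin N)) (hne : B.Nonempty) (g : Fin N → Fin n)
    (hcons : ∀ b1 ∈ B, ∀ b2 ∈ B, b1 < b2 → (∀ z ∈ B, ¬(b1 < z ∧ z < b2)) →
      SuccStep (B.image g) (g b1) (g b2))
    (hwrap : SuccStep (B.image g) (g (B.max' hne)) (g (B.min' hne))) :
    (B.image g).card ∣ B.card := by
  classical
  set W := B.image g with hW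
  set s := B.card with hs
  set c := W.card with hc
  have hs1 : 1 ≤ s := Finset.card_pos.2 hne
  set e := B.orderIsoOfFin rfl with he
  have heB : ∀ t : Fin s, (e t).1 ∈ B := fun t => (e t).2
  have hemono : ∀ t1 t2 : Fin s, t1 < t2 → (e t1).1 < (e t2).1 := by
    intro t1 t2 h
    exact e.lt_iff_lt.2 h
  have hcons' : ∀ t1 t2 : Fin s, t1 < t2 → (∀ l : Fin s, ¬(t1 < l ∧ l < t2)) →
      (∀ z ∈ B, ¬((e t1).1 < z ∧ z < (e t2).1)) := by
    intro t1 t2 h hl z hz hcon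
    set l := e.symm ⟨z, hz⟩ with hlz
    have hez : (e l).1 = z := by rw [hlz]; simp
    apply hl l
    constructor
    · apply e.lt_iff_lt.1
      show e t1 < e l
      rw [← Subtype.coe_lt_coe, hez]
      exact hcon.1
    · apply e.lt_iff_lt.1
      show e l < e t2
      rw [← Subtype.coe_lt_coe, hez]
      exact hcon.2
  -- min and max
  have hmin : (e ⟨0, hs1⟩).1 = B.min' hne := by
    apply le_antisymm
    · have hmem := B.min'_mem hne
      set l := e.symm ⟨B.min' hne, hmem⟩ with hl
      have hel : (e l).1 = B.min' hne := by rw [hl]; simp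
      rw [← hel]
      rcases Nat.eq_zero_or_pos l.val with h0 | h0
      · have h2 : (⟨0, hs1⟩ : Fin s) = l :=
          Fin.ext (show (⟨0, hs1⟩ : Fin s).val = l.val from h0.symm)
        rw [← h2]
      · have hlt : (⟨0, hs1⟩ : Fin s) < l := by rw [Fin.lt_def]; exact h0
        exact le_of_lt (hemono _ _ hlt)
    · exact Finset.min'_le _ _ (heB _)
  have hsm1 : s - 1 < s := by omega
  have hmax : (e ⟨s-1, hsm1⟩).1 = B.max' hne := by
    apply le_antisymm
    · exact Finset.le_max' _ _ (heB _)
    · have hmem := B.max'_mem hne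
      set l := e.symm ⟨B.max' hne, hmem⟩ with hl
      have hel : (e l).1 = B.max' hne := by rw [hl]; simp
      rw [← hel]
      rcases Nat.lt_or_ge l.val (s-1) with h0 | h0
      · have hlt : l < (⟨s-1, hsm1⟩ : Fin s) := by rw [Fin.lt_def]; exact h0
        exact le_of_lt (hemono _ _ hlt)
      · have hls := l.isLt
        have h2 : l = ⟨s-1, hsm1⟩ := Fin.ext (show l.val = s - 1 by omega)
        rw [← h2]
  have hstep : ∀ t : ℕ, ∀ ht : t + 1 < s,
      idxW W (g (e ⟨t+1, ht⟩).1) = (idxW W (g (e ⟨t, by omega⟩).1) + 1) % c := by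
    intro t ht
    apply succStep_idx
    apply hcons _ (heB _) _ (heB _)
    · exact hemono _ _ (Fin.mk_lt_mk.2 (by omega))
    · apply hcons'
      · exact Fin.mk_lt_mk.2 (by omega)
      · intro l hcon
        have h1 : t < l.val := hcon.1
        have h2 : l.val < t + 1 := hcon.2
        omega
  set I0 := idxW W (g (e ⟨0, hs1⟩).1) with hI0
  have key : ∀ t, ∀ ht : t < s, idxW W (g (e ⟨t, ht⟩).1) = (I0 + t) % c := by
    intro t
    induction t with
    | zero =>
      intro ht
      rw [Nat.add_zero, Nat.mod_eq_of_lt]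
      exact idx_lt_card (Finset.mem_image_of_mem g (heB _))
    | succ t ih =>
      intro ht
      have ht' : t < s := by omega
      have h1 : idxW W (g (e ⟨t, ht'⟩).1) = (I0 + t) % c := ih ht'
      have h2 : idxW W (g (e ⟨t+1, ht⟩).1) = (idxW W (g (e ⟨t, ht'⟩).1) + 1) % c := hstep t ht
      rw [h2, h1, mod_succ_helper, Nat.add_assoc]
  -- wrap
  have h1 : idxW W (g (B.min' hne)) = (idxW W (g (B.max' hne)) + 1) % c := succStep_idx hwrap
  have h2 : idxW W (g (B.max' hne)) = (I0 + (s-1)) % c := by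
    rw [← hmax]
    exact key (s-1) hsm1
  have h3 : idxW W (g (B.min' hne)) = I0 := by rw [← hmin]
  rw [h3, h2, mod_succ_helper] at h1
  have h4 : I0 + (s - 1) + 1 = I0 + s := by omega
  rw [h4] at h1
  have hidx0 : I0 < c := idx_lt_card (Finset.mem_image_of_mem g (heB _))
  have hmodeq : I0 ≡ I0 + s [MOD c] := by
    unfold Nat.ModEq
    rw [Nat.mod_eq_of_lt hidx0]
    exact h1
  have := (Nat.modEq_iff_dvd' (by omega)).1 hmodeq
  simpa using this

end WalkSec

section SuccSec
variable {n : ℕ}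

def predFin (v : Fin n) : Fin n := ⟨(v.val + n - 1) % n, Nat.mod_lt _ v.pos⟩
def succFin (u : Fin n) : Fin n := ⟨(u.val + 1) % n, Nat.mod_lt _ u.pos⟩

lemma mod_of_repr {n : ℕ} (t : ℕ) {x d : ℕ} (hd : d < n) (hx : x = d + n * t) : x % n = d := by
  rw [hx, Nat.add_mul_mod_self_left, Nat.mod_eq_of_lt hd]

lemma predFin_val_pos {v : Fin n} (hv : 1 ≤ v.val) : (predFin v).val = v.val - 1 := by
  show (v.val + n - 1) % n = v.val - 1
  have hn := v.isLt
  exact mod_of_repr 1 (by omega) (by have h : n*1 = n := by ring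
                                     omega)

lemma predFin_val_zero {v : Fin n} (hv : v.val = 0) : (predFin v).val = n - 1 := by
  show (v.val + n - 1) % n = n - 1
  have hn := v.pos
  exact mod_of_repr 0 (by omega) (by have h : n*0 = 0 := by ring
                                     omega)

lemma succFin_val_lt {u : Fin n} (hu : u.val + 1 < n) : (succFin u).val = u.val + 1 := by
  show (u.val + 1) % n = u.val + 1
  exact Nat.mod_eq_of_lt hu

lemma succFin_val_top {u : Fin n} (hu : u.val = n - 1) : (succFin u).val = 0 := by
  show (u.val + 1) % n = 0
  have hn := u.pos
  have : u.val + 1 = n := by omega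
  rw [this, Nat.mod_self]

lemma succ_step {R : Finset (Finset (Fin n))} {W : Finset (Fin n)} (hW : W ∈ R)
    {u v : Fin n} (hu : u ∈ W) (hv : v ∈ W) (hrel : rel R u (predFin v)) : SuccStep W u v := by
  refine ⟨hu, hv, ?_⟩
  intro w hw hb
  set v' := predFin v with hv'
  by_cases hv1 : 1 ≤ v.val
  · have hv'v : v'.val = v.val - 1 := predFin_val_pos hv1
    by_cases huv : u < v
    · -- no wrap
      rw [betw, if_pos huv] at hb
      have huv' : u ≤ v' := by
        rw [Fin.le_def, hv'v]
        have := Fin.lt_def.1 huv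
        omega
      have hJ := rel_Ioc huv' hrel
      rcases hJ W hW with hsub | hdisj
      · have := hsub hu
        rw [Finset.mem_Ioc] at this
        exact absurd this.1 (lt_irrefl u)
      · apply Finset.disjoint_left.1 hdisj hw
        rw [Finset.mem_Ioc]
        refine ⟨hb.1, ?_⟩
        rw [Fin.le_def, hv'v]
        have := Fin.lt_def.1 hb.2
        omega
    · rw [betw, if_neg huv] at hb
      have hvu : v ≤ u := not_lt.1 huv
      have hv'u : v' < u := by
        rw [Fin.lt_def, hv'v]
        have := Fin.le_def.1 hvu
        omega
      have hJ := rel_Ioc (le_of_lt hv'u) (rel_symm hrel)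
      rcases hJ W hW with hsub | hdisj
      · have hwJ := hsub hw
        rw [Finset.mem_Ioc] at hwJ
        rcases hb with h | h
        · exact absurd hwJ.2 (not_le.2 h)
        · have h1 := Fin.lt_def.1 hwJ.1
          rw [hv'v] at h1
          have h2 := Fin.lt_def.1 h
          omega
      · apply Finset.disjoint_left.1 hdisj hu
        rw [Finset.mem_Ioc]
        exact ⟨hv'u, le_refl u⟩
  · -- v = 0
    push_neg at hv1
    have hv0 : v.val = 0 := by omega
    have hv'v : v'.val = n - 1 := predFin_val_zero hv0
    have huv : ¬ u < v := by
      rw [Fin.lt_def, hv0]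
      omega
    rw [betw, if_neg huv] at hb
    have huw : u < w := by
      rcases hb with h | h
      · exact h
      · exfalso
        rw [Fin.lt_def, hv0] at h
        omega
    by_cases huv' : u < v'
    · have hJ := rel_Ioc (le_of_lt huv') hrel
      rcases hJ W hW with hsub | hdisj
      · have := hsub hu
        rw [Finset.mem_Ioc] at this
        exact absurd this.1 (lt_irrefl u)
      · apply Finset.disjoint_left.1 hdisj hw
        rw [Finset.mem_Ioc]
        refine ⟨huw, ?_⟩
        rw [Fin.le_def, hv'v]
        have := w.isLt
        omega
    · -- u = n-1
      have hun : u.val = n - 1 := by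
        have h1 := not_lt.1 huv'
        have h2 := Fin.le_def.1 h1
        rw [hv'v] at h2
        have := u.isLt
        omega
      have := Fin.lt_def.1 huw
      have := w.isLt
      omega

lemma succ'_step {R : Finset (Finset (Fin n))} {W'' : Finset (Fin n)} (hW'' : W'' ∈ R)
    {u v w : Fin n} (hu1 : succFin u ∈ W'') (hv : v ∈ W'')
    (hwv : rel R w v) (hb : betw u w v) : False := by
  have hwvne : w ≠ v := by
    rintro rfl
    rw [betw] at hb
    split at hb
    · exact absurd hb.2 (lt_irrefl w)
    · next h =>
      rcases hb with h2 | h2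
      · exact h h2
      · exact absurd h2 (lt_irrefl w)
  rcases lt_or_gt_of_ne hwvne with hwv' | hwv'
  · -- w < v : W'' ⊆ Ioc w v
    have hJ := rel_Ioc (le_of_lt hwv') hwv
    have hsub : W'' ⊆ Finset.Ioc w v := by
      rcases hJ W'' hW'' with h | h
      · exact h
      · exact absurd (Finset.mem_Ioc.2 ⟨hwv', le_refl v⟩) (Finset.disjoint_left.1 h hv) |> False.elim
    have hmem := hsub hu1
    rw [Finset.mem_Ioc] at hmem
    rw [betw] at hb
    split at hb
    · -- u < v
      next huv =>
      have hsv : (succFin u).val = u.val + 1 := by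
        apply succFin_val_lt
        have h1 := Fin.lt_def.1 huv
        have := v.isLt
        omega
      have h1 := Fin.lt_def.1 hmem.1
      rw [hsv] at h1
      have h2 := Fin.lt_def.1 hb.1
      omega
    · -- v ≤ u
      next huv =>
      have hvu := Fin.le_def.1 (not_lt.1 huv)
      by_cases hun : u.val = n - 1
      · have hsv := succFin_val_top hun
        have h1 := Fin.lt_def.1 hmem.1
        rw [hsv] at h1
        omega
      · have hsv : (succFin u).val = u.val + 1 := by
          apply succFin_val_lt
          have := u.isLt
          omega
        have h1 := Fin.le_def.1 hmem.2
        rw [hsv] at h1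
        omega
  · -- v < w : W'' disjoint from Ioc v w
    have hJ := rel_Ioc (le_of_lt hwv') (rel_symm hwv)
    have hdisj : Disjoint W'' (Finset.Ioc v w) := by
      rcases hJ W'' hW'' with h | h
      · exfalso
        have := h hv
        rw [Finset.mem_Ioc] at this
        exact absurd this.1 (lt_irrefl v)
      · exact h
    rw [betw] at hb
    split at hb
    · next huv =>
      exact absurd hb.2 (not_lt.2 (le_of_lt hwv'))
    · next huv =>
      have huw : u < w := by
        rcases hb with h | h
        · exact h
        · exact absurd h (not_lt.2 (le_of_lt hwv'))
      have hsv : (succFin u).val = u.val + 1 := by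
        apply succFin_val_lt
        have h1 := Fin.lt_def.1 huw
        have := w.isLt
        omega
      apply Finset.disjoint_left.1 hdisj hu1
      rw [Finset.mem_Ioc, Fin.lt_def, Fin.le_def, hsv]
      have h1 := Fin.le_def.1 (not_lt.1 huv)
      have h2 := Fin.lt_def.1 huw
      omega

end SuccSec

section RedArith
variable {k n : ℕ}

lemma red_pred {b : Fin ((k+1)*n)} (hb : 1 ≤ b.val) :
    red (⟨b.val - 1, by omega⟩ : Fin ((k+1)*n)) = predFin (red b) := by
  apply Fin.ext
  rw [red_val]
  show (b.val - 1) % n = (predFin (red b)).val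
  have hn : 0 < n := (red b).pos
  set r := b.val % n with hr
  have hrn : r < n := Nat.mod_lt _ hn
  have hdm : b.val % n + n * (b.val / n) = b.val := Nat.mod_add_div b.val n
  by_cases hr1 : 1 ≤ r
  · rw [predFin_val_pos (by rw [red_val, ← hr]; exact hr1), red_val, ← hr]
    exact mod_of_repr (b.val / n) (by omega) (by omega)
  · have hr0 : r = 0 := by omega
    rw [predFin_val_zero (by rw [red_val, ← hr]; exact hr0)]
    have hq : 1 ≤ b.val / n := by
      rcases Nat.eq_zero_or_pos (b.val / n) with h | h
      · rw [h] at hdm; omega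
      · exact h
    refine mod_of_repr (b.val / n - 1) (by omega) ?_
    have hmul : n * (b.val / n - 1) + n = n * (b.val / n) := by
      calc n * (b.val / n - 1) + n = n * ((b.val / n - 1) + 1) := by ring
        _ = n * (b.val / n) := by rw [Nat.sub_add_cancel hq]
    omega

lemma red_succ {b : Fin ((k+1)*n)} (hb : b.val + 1 < (k+1)*n) :
    red (⟨b.val + 1, hb⟩ : Fin ((k+1)*n)) = succFin (red b) := by
  apply Fin.ext
  rw [red_val]
  show (b.val + 1) % n = (succFin (red b)).val
  have hn : 0 < n := (red b).pos
  set r := b.val % n with hr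
  have hrn : r < n := Nat.mod_lt _ hn
  have hdm : b.val % n + n * (b.val / n) = b.val := Nat.mod_add_div b.val n
  by_cases hrtop : r = n - 1
  · rw [succFin_val_top (by rw [red_val, ← hr]; exact hrtop)]
    refine mod_of_repr (b.val / n + 1) (by omega) ?_
    have hmul : n * (b.val / n + 1) = n * (b.val / n) + n := by ring
    omega
  · rw [succFin_val_lt (by rw [red_val, ← hr]; omega), red_val, ← hr]
    exact mod_of_repr (b.val / n) (by omega) (by omega)

lemma red_last (hn : 0 < n) (h0 : 0 < (k+1)*n) :
    (red (⟨(k+1)*n - 1, by omega⟩ : Fin ((k+1)*n))).val = n - 1 := by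
  rw [red_val]
  show ((k+1)*n - 1) % n = n - 1
  have h1 : (k+1)*n = k*n + n := by ring
  refine mod_of_repr k (by omega) ?_
  have h2 : n * k = k * n := by ring
  omega

lemma red_zero (h0 : 0 < (k+1)*n) : (red (⟨0, h0⟩ : Fin ((k+1)*n))).val = 0 := by
  rw [red_val]
  exact Nat.zero_mod n

end RedArith

section LSec
variable {m : ℕ} {π : Finset (Finset (Fin m))}

lemma Lfw (hp : IsPartition π) (hnc : IsNonCrossing π) {x y : Fin m}
    (hxy : x ≤ y) (hx1 : x.val + 1 < m) (hy1 : y.val + 1 < m)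
    (hUB : UB (qExp π) (Finset.Ioc x y)) :
    ∃ B ∈ π, (⟨x.val + 1, hx1⟩ : Fin m) ∈ B ∧ (⟨y.val + 1, hy1⟩ : Fin m) ∈ B := by
  classical
  have hm : 0 < m := by omega
  obtain ⟨B, hB, hx1B⟩ := part_blockOf hp (⟨x.val + 1, hx1⟩ : Fin m)
  have hne : B.Nonempty := ⟨_, hx1B⟩
  set T := B.filter (fun b => b.val ≤ y.val + 1) with hT
  have hxT : (⟨x.val+1, hx1⟩ : Fin m) ∈ T := Finset.mem_filter.2 ⟨hx1B, by
    show x.val + 1 ≤ y.val + 1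
    have := Fin.le_def.1 hxy
    omega⟩
  have hTne : T.Nonempty := ⟨_, hxT⟩
  set bs := T.max' hTne with hbs
  have hbsT : bs ∈ T := T.max'_mem hTne
  have hbsB : bs ∈ B := (Finset.mem_filter.1 hbsT).1
  have hbsle : bs.val ≤ y.val + 1 := (Finset.mem_filter.1 hbsT).2
  have hxbs : x.val + 1 ≤ bs.val := by
    have h := T.le_max' _ hxT
    rw [Fin.le_def] at h
    simpa using h
  by_cases hbseq : bs.val = y.val + 1
  · refine ⟨B, hB, hx1B, ?_⟩
    have : bs = (⟨y.val+1, hy1⟩ : Fin m) := Fin.ext hbseq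
    exact this ▸ hbsB
  exfalso
  have hbsy : bs.val ≤ y.val := by omega
  have hbsI : bs ∈ Finset.Ioc x y := by
    rw [Finset.mem_Ioc, Fin.lt_def, Fin.le_def]
    omega
  by_cases hbig : ∃ b ∈ B, bs.val < b.val
  · obtain ⟨b0, hb0B, hb0⟩ := hbig
    set U := B.filter (fun b => bs.val < b.val) with hU
    have hUne : U.Nonempty := ⟨b0, Finset.mem_filter.2 ⟨hb0B, hb0⟩⟩
    set b' := U.min' hUne with hb'
    have hb'U : b' ∈ U := U.min'_mem hUne
    have hb'B : b' ∈ B := (Finset.mem_filter.1 hb'U).1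
    have hbsb' : bs.val < b'.val := (Finset.mem_filter.1 hb'U).2
    have hb'y : y.val + 2 ≤ b'.val := by
      by_contra hcon
      push_neg at hcon
      have : b' ∈ T := Finset.mem_filter.2 ⟨hb'B, by omega⟩
      exact absurd (Fin.le_def.1 (T.le_max' _ this)) (by omega)
    have hcons : ∀ z ∈ B, ¬(bs < z ∧ z < b') := by
      rintro z hz ⟨h1, h2⟩
      have hzU : z ∈ U := Finset.mem_filter.2 ⟨hz, Fin.lt_def.1 h1⟩
      exact absurd (Fin.le_def.1 (U.min'_le _ hzU)) (not_le.2 (Fin.lt_def.1 h2))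
    have hrel : rel π bs ⟨b'.val - 1, by omega⟩ :=
      rel_gap hp hnc hB hbsB hb'B (Fin.lt_def.2 hbsb') hcons
    have hD := hUB (classOf π bs) (classOf_mem_qExp bs)
    rcases hD with hsub | hdisj
    · have : (⟨b'.val - 1, by omega⟩ : Fin m) ∈ Finset.Ioc x y :=
        hsub (mem_classOf.2 hrel)
      rw [Finset.mem_Ioc, Fin.le_def] at this
      have : b'.val - 1 ≤ y.val := this.2
      omega
    · exact Finset.disjoint_left.1 hdisj (mem_classOf.2 (rel_refl bs)) hbsI
  · push_neg at hbig
    have hbsmax : B.max' hne = bs := by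
      apply le_antisymm
      · exact Finset.max'_le _ _ _ (fun b hb => Fin.le_def.2 (hbig b hb))
      · exact Finset.le_max' _ _ hbsB
    by_cases hminpos : 1 ≤ (B.min' hne).val
    · have hrel := rel_wrap hp hnc hB hne hminpos
      have hmlex : (B.min' hne).val ≤ x.val + 1 := by
        have h := B.min'_le _ hx1B
        rw [Fin.le_def] at h
        simpa using h
      have hD := hUB (classOf π ⟨(B.min' hne).val - 1, by omega⟩)
        (classOf_mem_qExp _)
      rcases hD with hsub | hdisj
      · have hmem : (⟨(B.min' hne).val - 1, by omega⟩ : Fin m) ∈ Finset.Ioc x y :=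
          hsub (mem_classOf.2 (rel_refl _))
        have h7 : x.val < (B.min' hne).val - 1 := by
          have h5 := (Finset.mem_Ioc.1 hmem).1
          rw [Fin.lt_def] at h5
          simpa using h5
        omega
      · apply Finset.disjoint_left.1 hdisj (mem_classOf.2 hrel)
        rw [hbsmax]
        exact hbsI
    · push_neg at hminpos
      have hmin0 : (B.min' hne).val = 0 := by omega
      have hrel := rel_wrap0 hp hnc hB hne hmin0 hm
      have hD := hUB (classOf π (B.max' hne)) (classOf_mem_qExp _)
      rcases hD with hsub | hdisj
      · have hmem : (⟨m - 1, by omega⟩ : Fin m) ∈ Finset.Ioc x y :=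
          hsub (mem_classOf.2 hrel)
        have h7 : m - 1 ≤ y.val := by
          have h5 := (Finset.mem_Ioc.1 hmem).2
          rw [Fin.le_def] at h5
          simpa using h5
        omega
      · apply Finset.disjoint_left.1 hdisj (mem_classOf.2 (rel_refl _))
        rw [hbsmax]
        exact hbsI

lemma Lprefix (hp : IsPartition π) (hnc : IsNonCrossing π) {y : Fin m}
    (hy1 : y.val + 1 < m) (hUB : UB (qExp π) (Finset.Iic y)) :
    ∃ B ∈ π, (⟨0, by omega⟩ : Fin m) ∈ B ∧ (⟨y.val + 1, hy1⟩ : Fin m) ∈ B := by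
  obtain ⟨B, hB, hyB⟩ := part_blockOf hp (⟨y.val + 1, hy1⟩ : Fin m)
  have hne : B.Nonempty := ⟨_, hyB⟩
  refine ⟨B, hB, ?_, hyB⟩
  have hmin0 : (B.min' hne).val = 0 := by
    by_contra hcon
    have hminpos : 1 ≤ (B.min' hne).val := by omega
    have hrel := rel_wrap hp hnc hB hne hminpos
    have hmlex : (B.min' hne).val ≤ y.val + 1 := by
      have h := B.min'_le _ hyB
      rw [Fin.le_def] at h
      simpa using h
    have hD := hUB (classOf π ⟨(B.min' hne).val - 1, by omega⟩) (classOf_mem_qExp _)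
    rcases hD with hsub | hdisj
    · have hmem : B.max' hne ∈ Finset.Iic y := hsub (mem_classOf.2 hrel)
      rw [Finset.mem_Iic, Fin.le_def] at hmem
      have hmax : y.val + 1 ≤ (B.max' hne).val := by
        have h := B.le_max' _ hyB
        rw [Fin.le_def] at h
        simpa using h
      omega
    · apply Finset.disjoint_left.1 hdisj (mem_classOf.2 (rel_refl _))
      rw [Finset.mem_Iic, Fin.le_def]
      show (B.min' hne).val - 1 ≤ y.val
      omega
  have : B.min' hne = (⟨0, by omega⟩ : Fin m) := Fin.ext hmin0
  exact this ▸ B.min'_mem hne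

lemma Lsuffix (hp : IsPartition π) (hnc : IsNonCrossing π) {x : Fin m}
    (hx1 : x.val + 1 < m)
    (hUB : UB (qExp π) (Finset.Ioc x ⟨m - 1, by omega⟩)) :
    ∃ B ∈ π, (⟨x.val + 1, hx1⟩ : Fin m) ∈ B ∧ (⟨0, by omega⟩ : Fin m) ∈ B := by
  obtain ⟨B, hB, hxB⟩ := part_blockOf hp (⟨x.val + 1, hx1⟩ : Fin m)
  have hne : B.Nonempty := ⟨_, hxB⟩
  refine ⟨B, hB, hxB, ?_⟩
  have hmin0 : (B.min' hne).val = 0 := by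
    by_contra hcon
    have hminpos : 1 ≤ (B.min' hne).val := by omega
    have hrel := rel_wrap hp hnc hB hne hminpos
    have hmlex : (B.min' hne).val ≤ x.val + 1 := by
      have h := B.min'_le _ hxB
      rw [Fin.le_def] at h
      simpa using h
    have hD := hUB (classOf π ⟨(B.min' hne).val - 1, by omega⟩) (classOf_mem_qExp _)
    rcases hD with hsub | hdisj
    · have hmem : (⟨(B.min' hne).val - 1, by omega⟩ : Fin m) ∈ Finset.Ioc x ⟨m-1, by omega⟩ :=
        hsub (mem_classOf.2 (rel_refl _))
      have h7 : x.val < (B.min' hne).val - 1 := by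
        have h5 := (Finset.mem_Ioc.1 hmem).1
        rw [Fin.lt_def] at h5
        simpa using h5
      omega
    · apply Finset.disjoint_left.1 hdisj (mem_classOf.2 hrel)
      rw [Finset.mem_Ioc]
      have hmax : x.val + 1 ≤ (B.max' hne).val := by
        have h := B.le_max' _ hxB
        rw [Fin.le_def] at h
        simpa using h
      have hlt := (B.max' hne).isLt
      constructor
      · rw [Fin.lt_def]
        omega
      · rw [Fin.le_def]
        show (B.max' hne).val ≤ m - 1
        omega
  have : B.min' hne = (⟨0, by omega⟩ : Fin m) := Fin.ext hmin0
  exact this ▸ B.min'_mem hne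

end LSec

section DivSec
variable {k n : ℕ} {π : Finset (Finset (Fin ((k+1)*n)))}

theorem div_pi (hn : 0 < n) (hπ : IsPartition π) (hnc : IsNonCrossing π)
    (hdown : ∀ x y : Fin ((k+1)*n), rel π x y → rel (redPart π) (red x) (red y))
    {B : Finset (Fin ((k+1)*n))} (hB : B ∈ π) : (B.image red).card ∣ B.card := by
  have hne : B.Nonempty := hπ.1 B hB
  have hm : 0 < (k+1)*n := by
    obtain ⟨b, _⟩ := hne
    have := b.isLt
    omega
  have hW : B.image red ∈ redPart π := mem_redPart.2 ⟨B, hB, rfl⟩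
  apply walk_dvd B hne red
  · -- consecutive steps
    intro b1 hb1 b2 hb2 hlt hcons
    apply succ_step hW (Finset.mem_image_of_mem red hb1) (Finset.mem_image_of_mem red hb2)
    have h1 : rel π b1 ⟨b2.val - 1, by omega⟩ := rel_gap hπ hnc hB hb1 hb2 hlt hcons
    have h2 := hdown _ _ h1
    have h3 : red (⟨b2.val - 1, by omega⟩ : Fin ((k+1)*n)) = predFin (red b2) :=
      red_pred (by have := Fin.lt_def.1 hlt; omega)
    rwa [h3] at h2
  · -- wrap
    set α := B.min' hne with hα
    set β := B.max' hne with hβ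
    apply succ_step hW (Finset.mem_image_of_mem red (B.max'_mem hne))
      (Finset.mem_image_of_mem red (B.min'_mem hne))
    by_cases hα1 : 1 ≤ α.val
    · have h1 := rel_wrap hπ hnc hB hne hα1
      have h2 := hdown _ _ h1
      have h3 : red (⟨α.val - 1, by omega⟩ : Fin ((k+1)*n)) = predFin (red α) :=
        red_pred hα1
      rw [h3] at h2
      exact rel_symm h2
    · push_neg at hα1
      have hα0 : α.val = 0 := by omega
      have hredα : (red α).val = 0 := by rw [red_val, hα0, Nat.zero_mod]
      by_cases hβtop : β.val = (k+1)*n - 1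
      · have hpred : predFin (red α) = red β := by
          apply Fin.ext
          rw [predFin_val_zero hredα]
          have : β = (⟨(k+1)*n - 1, by omega⟩ : Fin ((k+1)*n)) := Fin.ext hβtop
          rw [this, red_last hn hm]
      
        rw [hpred]
        exact rel_refl (red β)
      · have h1 := rel_wrap0 hπ hnc hB hne hα0 hm
        have h2 := hdown _ _ h1
        have h3 : red (⟨(k+1)*n - 1, by omega⟩ : Fin ((k+1)*n)) = predFin (red α) := by
          apply Fin.ext
          rw [predFin_val_zero hredα, red_last hn hm]
        rwa [h3] at h2

theorem div_kr (hn : 0 < n) (hπ : IsPartition π) (hnc : IsNonCrossing π)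
    (hR : IsPartition (redPart π))
    (hQclass : ∀ D ∈ redPart (qExp π), ∀ x ∈ D, ∀ y ∈ D, rel (redPart π) x y)
    {C : Finset (Fin ((k+1)*n))} (hC : C ∈ qExp π) : (C.image red).card ∣ C.card := by
  have hq : IsPartition (qExp π) := qExp_isPartition
  have hqnc : IsNonCrossing (qExp π) := nc_of_unionPart_barred (isKr_qExp hπ hnc).2.1
  have hne : C.Nonempty := hq.1 C hC
  have hm : 0 < (k+1)*n := by
    obtain ⟨b, _⟩ := hne
    have := b.isLt
    omega
  have hW' : C.image red ∈ redPart (qExp π) := mem_redPart.2 ⟨C, hC, rfl⟩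
  apply walk_dvd C hne red
  · -- consecutive
    intro c1 hc1 c2 hc2 hlt hcons
    have hltv := Fin.lt_def.1 hlt
    have hc2m := c2.isLt
    have hgap : UB (qExp π) (Finset.Ioc c1 ⟨c2.val - 1, by omega⟩) := by
      rw [← Ioo_eq_Ioc_pred hlt]
      exact gap_UB hq hqnc hC hc1 hc2 hlt hcons
    obtain ⟨B'', hB'', hmem1, hmem2⟩ := Lfw hπ hnc
      (x := c1) (y := ⟨c2.val - 1, by omega⟩)
      (by rw [Fin.le_def]; show c1.val ≤ c2.val - 1; omega)
      (by omega) (by show c2.val - 1 + 1 < (k+1)*n; omega) hgap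
    have hWR : B''.image red ∈ redPart π := mem_redPart.2 ⟨B'', hB'', rfl⟩
    have hmem2' : c2 ∈ B'' := by
      have heq : (⟨c2.val - 1 + 1, by omega⟩ : Fin ((k+1)*n)) = c2 :=
        Fin.ext (by show c2.val - 1 + 1 = c2.val; omega)
      exact heq ▸ hmem2
    have hsucc1 : succFin (red c1) ∈ B''.image red := by
      have h4 : red (⟨c1.val + 1, by omega⟩ : Fin ((k+1)*n)) = succFin (red c1) :=
        red_succ (by omega)
      exact h4 ▸ Finset.mem_image_of_mem red hmem1
    refine ⟨Finset.mem_image_of_mem red hc1, Finset.mem_image_of_mem red hc2, ?_⟩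
    intro w hw hb
    exact succ'_step hWR hsucc1 (Finset.mem_image_of_mem red hmem2') 
      (hQclass _ hW' w hw _ (Finset.mem_image_of_mem red hc2)) hb
  · -- wrap
    set α := C.min' hne with hα
    set β := C.max' hne with hβ
    refine ⟨Finset.mem_image_of_mem red (C.max'_mem hne),
      Finset.mem_image_of_mem red (C.min'_mem hne), ?_⟩
    intro w hw hb
    by_cases hβtop : β.val = (k+1)*n - 1
    · by_cases hα1 : 1 ≤ α.val
      · -- prefix case
        have h1 := rel_wrap hq hqnc hC hne hα1
        have h2 : UB (qExp π) (Finset.Ioc (⟨α.val - 1, by omega⟩ : Fin ((k+1)*n)) β) :=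
          rel_Ioc (by rw [Fin.le_def]; show α.val - 1 ≤ β.val
                      have := Fin.le_def.1 (C.min'_le _ (C.max'_mem hne)); omega) h1
        have h3 : UB (qExp π) (Finset.Iic (⟨α.val - 1, by omega⟩ : Fin ((k+1)*n))) := by
          have hcompl := UB.compl h2
          have hset : (Finset.Ioc (⟨α.val - 1, by omega⟩ : Fin ((k+1)*n)) β)ᶜ
              = Finset.Iic (⟨α.val - 1, by omega⟩ : Fin ((k+1)*n)) := by
            ext z
            have hz := z.isLt
            simp only [Finset.mem_compl, Finset.mem_Ioc, Finset.mem_Iic, not_and, not_le,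
              Fin.lt_def, Fin.le_def]
            show (α.val - 1 < z.val → β.val < z.val) ↔ z.val ≤ α.val - 1
            omega
          rwa [hset] at hcompl
        obtain ⟨B'', hB'', hmem0, hmem1⟩ := Lprefix hπ hnc
          (y := ⟨α.val - 1, by omega⟩) (by show α.val - 1 + 1 < (k+1)*n
                                           have := α.isLt; omega) h3
        have hWR : B''.image red ∈ redPart π := mem_redPart.2 ⟨B'', hB'', rfl⟩
        have hmem1' : α ∈ B'' := by
          have heq : (⟨α.val - 1 + 1, by have := α.isLt; omega⟩ : Fin ((k+1)*n)) = α :=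
            Fin.ext (by show α.val - 1 + 1 = α.val; omega)
          exact heq ▸ hmem1
        have hsucc1 : succFin (red β) ∈ B''.image red := by
          have hβeq : β = (⟨(k+1)*n - 1, by omega⟩ : Fin ((k+1)*n)) := Fin.ext hβtop
          have h4 : succFin (red β) = red (⟨0, hm⟩ : Fin ((k+1)*n)) := by
            apply Fin.ext
            rw [succFin_val_top (by rw [hβeq]; exact red_last hn hm), red_val, Nat.zero_mod]
          rw [h4]
          exact Finset.mem_image_of_mem red hmem0
        exact succ'_step hWR hsucc1 (Finset.mem_image_of_mem red hmem1')
          (hQclass _ hW' w hw _ (Finset.mem_image_of_mem red (C.min'_mem hne))) hb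
      · -- α = 0 and β = top : trivial
        push_neg at hα1
        have hα0 : α.val = 0 := by omega
        have hredα : (red α).val = 0 := by rw [red_val, hα0, Nat.zero_mod]
        have hredβ : (red β).val = n - 1 := by
          have hβeq : β = (⟨(k+1)*n - 1, by omega⟩ : Fin ((k+1)*n)) := Fin.ext hβtop
          rw [hβeq]
          exact red_last hn hm
        rw [betw] at hb
        have h5 : ¬ (red β < red α) := by
          rw [Fin.lt_def, hredα]
          omega
        rw [if_neg h5] at hb
        rcases hb with h | h
        · rw [Fin.lt_def, hredβ] at h
          have := w.isLt
          omega
        · rw [Fin.lt_def, hredα] at h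
          omega
    · -- β < top
      have hβ1 : β.val + 1 < (k+1)*n := by
        have := β.isLt
        omega
      by_cases hα1 : 1 ≤ α.val
      · -- interior : Lfw on the hull
        have h1 := rel_wrap hq hqnc hC hne hα1
        have h2 : UB (qExp π) (Finset.Ioc (⟨α.val - 1, by omega⟩ : Fin ((k+1)*n)) β) :=
          rel_Ioc (by rw [Fin.le_def]
                      show α.val - 1 ≤ β.val
                      have h6 := Fin.le_def.1 (C.min'_le _ (C.max'_mem hne))
                      omega) h1
        obtain ⟨B'', hB'', hmem1, hmem2⟩ := Lfw hπ hnc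
          (x := (⟨α.val - 1, by omega⟩ : Fin ((k+1)*n))) (y := β)
          (by rw [Fin.le_def]
              show α.val - 1 ≤ β.val
              have h6 := Fin.le_def.1 (C.min'_le _ (C.max'_mem hne))
              omega)
          (by show α.val - 1 + 1 < (k+1)*n
              have := α.isLt
              omega) hβ1 h2
        have hWR : B''.image red ∈ redPart π := mem_redPart.2 ⟨B'', hB'', rfl⟩
        have hmem1' : α ∈ B'' := by
          have heq : (⟨α.val - 1 + 1, by have := α.isLt; omega⟩ : Fin ((k+1)*n)) = α :=
            Fin.ext (by show α.val - 1 + 1 = α.val; omega)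
          exact heq ▸ hmem1
        have hsucc1 : succFin (red β) ∈ B''.image red := by
          have h4 : red (⟨β.val + 1, hβ1⟩ : Fin ((k+1)*n)) = succFin (red β) := red_succ hβ1
          exact h4 ▸ Finset.mem_image_of_mem red hmem2
        exact succ'_step hWR hsucc1 (Finset.mem_image_of_mem red hmem1')
          (hQclass _ hW' w hw _ (Finset.mem_image_of_mem red (C.min'_mem hne))) hb
      · -- α = 0 : Lsuffix
        push_neg at hα1
        have hα0 : α.val = 0 := by omega
        have h1 := rel_wrap0 hq hqnc hC hne hα0 hm
        have h2 : UB (qExp π) (Finset.Ioc β (⟨(k+1)*n - 1, by omega⟩ : Fin ((k+1)*n))) :=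
          rel_Ioc (by rw [Fin.le_def]
                      show β.val ≤ (k+1)*n - 1
                      have := β.isLt
                      omega) h1
        obtain ⟨B'', hB'', hmem1, hmem0⟩ := Lsuffix hπ hnc (x := β) hβ1 h2
        have hWR : B''.image red ∈ redPart π := mem_redPart.2 ⟨B'', hB'', rfl⟩
        have hsucc1 : succFin (red β) ∈ B''.image red := by
          have h4 : red (⟨β.val + 1, hβ1⟩ : Fin ((k+1)*n)) = succFin (red β) := red_succ hβ1
          exact h4 ▸ Finset.mem_image_of_mem red hmem1
        have hmem0' : α ∈ B'' := by
          have heq : (⟨0, by omega⟩ : Fin ((k+1)*n)) = α := Fin.ext (by rw [hα0])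
          exact heq ▸ hmem0
        exact succ'_step hWR hsucc1 (Finset.mem_image_of_mem red hmem0')
          (hQclass _ hW' w hw _ (Finset.mem_image_of_mem red (C.min'_mem hne))) hb

end DivSec

section Final
variable {k n : ℕ}

lemma unbar_image_redInterl {B : Finset (Fin ((k+1)*n))} :
    (unbar B).image redInterl = unbar (B.image red) := by
  unfold unbar
  rw [Finset.image_image, Finset.image_image]
  rfl

lemma barred_image_redInterl {C : Finset (Fin ((k+1)*n))} :
    (barred C).image redInterl = barred (C.image red) := by
  unfold barred
  rw [Finset.image_image, Finset.image_image]
  rfl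

lemma unbar_card {m : ℕ} {B : Finset (Fin m)} : (unbar B).card = B.card := by
  apply Finset.card_image_of_injective
  intro a b h
  exact congrArg (fun z => (ofLex z).1) h

lemma barred_card {m : ℕ} {B : Finset (Fin m)} : (barred B).card = B.card := by
  apply Finset.card_image_of_injective
  intro a b h
  exact congrArg (fun z => (ofLex z).1) h

lemma unbar_injective {m : ℕ} : Function.Injective (unbar (m := m)) := by
  intro B1 B2 h
  ext i
  rw [← mem_unbar (B := B1), ← mem_unbar (B := B2), h]

lemma barred_injective {m : ℕ} : Function.Injective (barred (m := m)) := by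
  intro B1 B2 h
  ext i
  rw [← mem_barred (B := B1), ← mem_barred (B := B2), h]

/-- the multiplicities sum within one fiber -/
lemma sum_mult {π : Finset (Finset (Fin ((k+1)*n)))} (hn : 0 < n)
    (hπ : IsPartition π) (hR : IsPartition (redPart π))
    (hdiv : ∀ B ∈ π, (B.image red).card ∣ B.card) :
    ∑ B ∈ π, (B.card / (B.image red).card) = (k+1) * (redPart π).card := by
  classical
  rw [← Finset.sum_fiberwise_of_maps_to (g := fun B => B.image red)
    (fun B hB => mem_redPart.2 ⟨B, hB, rfl⟩)]
  have hfib : ∀ W ∈ redPart π,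
      ∑ B ∈ π.filter (fun B => B.image red = W), (B.card / (B.image red).card) = k + 1 := by
    intro W hW
    have hWpos : 0 < W.card := Finset.card_pos.2 (redPart_nonempty hπ hW)
    apply Nat.eq_of_mul_eq_mul_right hWpos
    rw [Finset.sum_mul]
    have h1 : ∀ B ∈ π.filter (fun B => B.image red = W),
        B.card / (B.image red).card * W.card = B.card := by
      intro B hB
      have h2 := (Finset.mem_filter.1 hB).2
      rw [h2]
      exact Nat.div_mul_cancel (h2 ▸ hdiv B (Finset.mem_filter.1 hB).1)
    rw [Finset.sum_congr rfl h1, blocks_to_W_sum hn hπ hR hW]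
  rw [Finset.sum_congr rfl hfib, Finset.sum_const, smul_eq_mul, Nat.mul_comm]

lemma card_le_mul {π : Finset (Finset (Fin ((k+1)*n)))} (hn : 0 < n)
    (hπ : IsPartition π) (hR : IsPartition (redPart π)) :
    π.card ≤ (k+1) * (redPart π).card := by
  rw [card_part_eq_sum_cnt (π := π)]
  calc ∑ W ∈ redPart π, (π.filter (fun B => B.image red = W)).card
      ≤ ∑ _W ∈ redPart π, (k+1) := Finset.sum_le_sum (fun W hW => cnt_le hn hπ hR hW)
    _ = (k+1) * (redPart π).card := by rw [Finset.sum_const, smul_eq_mul, Nat.mul_comm]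

theorem stmt13' (hn : 1 ≤ n) (π : Finset (Finset (Fin ((k + 1) * n)))) (hπ : π ∈ NCk k n) :
    ∑ V ∈ unionPart π (kr π), (V.card / (V.image redInterl).card - 1) = k := by
  classical
  obtain ⟨hp, hnc, hRp, hRnc, hQp, hQnc⟩ := hπ
  have hn0 : 0 < n := hn
  have hm : 0 < (k+1)*n := by positivity
  have hkq : kr π = qExp π := kr_eq_qExp hp hnc
  have hQp' : IsPartition (redPart (qExp π)) := hkq ▸ hQp
  -- counts at level m
  have hcountm : π.card + (qExp π).card = (k+1)*n + 1 := count_qExp hm hp hnc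
  -- counts at level n
  have hcountn : (redPart π).card + (qExp (redPart π)).card = n + 1 :=
    count_qExp hn0 hRp hRnc
  -- refinement : qExp (redPart π) refines redPart (kr π)
  have refQ : Refines (qExp (redPart π)) (redPart (qExp π)) := by
    intro D hD
    obtain ⟨i0, _, rfl⟩ := Finset.mem_image.1 hD
    obtain ⟨E, hE, hi0E⟩ := part_blockOf hQp' i0
    refine ⟨E, hE, ?_⟩
    have key : ∀ i j : Fin n, i < j → rel (redPart π) i j →
        ∃ F ∈ redPart (qExp π), i ∈ F ∧ j ∈ F := by
      intro i j hij hrel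
      obtain ⟨x, y, hrx, hry, hxy, hUBxy⟩ :=
        star hn0 hp hnc hRp hij (rel_Ioc (le_of_lt hij) hrel)
      have hrelxy : rel π x y := rel_of_Ioc (le_of_lt hxy) hUBxy
      have hyC : y ∈ classOf π x := mem_classOf.2 hrelxy
      have hxC : x ∈ classOf π x := mem_classOf.2 (rel_refl x)
      refine ⟨(classOf π x).image red, mem_redPart.2 ⟨classOf π x, classOf_mem_qExp x, rfl⟩,
        ?_, ?_⟩
      · exact hrx ▸ Finset.mem_image_of_mem red hxC
      · exact hry ▸ Finset.mem_image_of_mem red hyC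
    intro j hjD
    have hrel : rel (redPart π) i0 j := mem_classOf.1 hjD
    rcases lt_trichotomy i0 j with h | h | h
    · obtain ⟨F, hF, hi0F, hjF⟩ := key i0 j h hrel
      rwa [part_unique hQp' hF hE hi0F hi0E] at hjF
    · exact h ▸ hi0E
    · obtain ⟨F, hF, hjF, hi0F⟩ := key j i0 h (rel_symm hrel)
      rwa [part_unique hQp' hF hE hi0F hi0E] at hjF
  have hcard1 : (redPart (qExp π)).card ≤ (qExp (redPart π)).card :=
    refines_card_le qExp_isPartition hQp' refQ
  -- lower bound
  have hle1 : π.card ≤ (k+1) * (redPart π).card := card_le_mul hn0 hp hRp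
  have hle2 : (qExp π).card ≤ (k+1) * (redPart (qExp π)).card :=
    card_le_mul hn0 qExp_isPartition hQp'
  have hlow : n + 1 ≤ (redPart π).card + (redPart (qExp π)).card := by
    by_contra hcon
    push_neg at hcon
    have h1 : (redPart π).card + (redPart (qExp π)).card ≤ n := by omega
    have h2 : (k+1) * ((redPart π).card + (redPart (qExp π)).card) ≤ (k+1) * n :=
      Nat.mul_le_mul_left _ h1
    have h3 : (k+1) * ((redPart π).card + (redPart (qExp π)).card)
        = (k+1) * (redPart π).card + (k+1) * (redPart (qExp π)).card := by ring
    omega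
  have hQcard : (qExp (redPart π)).card = (redPart (qExp π)).card := by omega
  have hQeq : qExp (redPart π) = redPart (qExp π) :=
    refines_eq_of_card qExp_isPartition hQp' refQ hQcard
  -- the downward compatibility of rel
  have hdown : ∀ x y : Fin ((k+1)*n), rel π x y → rel (redPart π) (red x) (red y) := by
    intro x y hrel
    have hD : (classOf π x).image red ∈ qExp (redPart π) := by
      rw [hQeq]
      exact mem_redPart.2 ⟨classOf π x, classOf_mem_qExp x, rfl⟩
    exact rel_of_mem_qExp hD
      (Finset.mem_image_of_mem red (mem_classOf.2 (rel_refl x)))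
      (Finset.mem_image_of_mem red (mem_classOf.2 hrel))
  have hQclass : ∀ D ∈ redPart (qExp π), ∀ x ∈ D, ∀ y ∈ D, rel (redPart π) x y := by
    intro D hD x hx y hy
    rw [← hQeq] at hD
    exact rel_of_mem_qExp hD hx hy
  -- divisibility
  have hdiv1 : ∀ B ∈ π, (B.image red).card ∣ B.card := fun B hB => div_pi hn0 hp hnc hdown hB
  have hdiv2 : ∀ C ∈ qExp π, (C.image red).card ∣ C.card :=
    fun C hC => div_kr hn0 hp hnc hRp hQclass hC
  -- sums
  have hsum1 : ∑ B ∈ π, (B.card / (B.image red).card) = (k+1) * (redPart π).card :=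
    sum_mult hn0 hp hRp hdiv1
  have hsum2 : ∑ C ∈ qExp π, (C.card / (C.image red).card) = (k+1) * (redPart (qExp π)).card :=
    sum_mult hn0 qExp_isPartition hQp' hdiv2
  -- split the sum over the union
  rw [hkq]
  unfold unionPart
  have hdisjoint : Disjoint (π.image unbar) ((qExp π).image barred) := by
    rw [Finset.disjoint_left]
    rintro V hV1 hV2
    obtain ⟨B, hB, rfl⟩ := Finset.mem_image.1 hV1
    obtain ⟨C, hC, hCB⟩ := Finset.mem_image.1 hV2
    obtain ⟨b, hb⟩ := hp.1 B hB
    have : ub b ∈ unbar B := mem_unbar.2 hb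
    rw [← hCB] at this
    exact ub_not_mem_barred this
  rw [Finset.sum_union hdisjoint]
  rw [Finset.sum_image (fun B _ B' _ h => unbar_injective h),
    Finset.sum_image (fun C _ C' _ h => barred_injective h)]
  have hterm1 : ∀ B ∈ π, (unbar B).card / ((unbar B).image redInterl).card - 1
      = B.card / (B.image red).card - 1 := by
    intro B _
    rw [unbar_image_redInterl, unbar_card, unbar_card]
  have hterm2 : ∀ C ∈ qExp π, (barred C).card / ((barred C).image redInterl).card - 1
      = C.card / (C.image red).card - 1 := by
    intro C _
    rw [barred_image_redInterl, barred_card, barred_card]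
  rw [Finset.sum_congr rfl hterm1, Finset.sum_congr rfl hterm2]
  -- now subtract the 1s
  have hone1 : ∀ B ∈ π, 1 ≤ B.card / (B.image red).card := by
    intro B hB
    have hBpos : 0 < (B.image red).card :=
      Finset.card_pos.2 ((hp.1 B hB).image red)
    rw [Nat.one_le_div_iff hBpos]
    exact Finset.card_image_le
  have hone2 : ∀ C ∈ qExp π, 1 ≤ C.card / (C.image red).card := by
    intro C hC
    have hCpos : 0 < (C.image red).card :=
      Finset.card_pos.2 (((qExp_isPartition (p := π)).1 C hC).image red)
    rw [Nat.one_le_div_iff hCpos]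
    exact Finset.card_image_le
  have hsub1 : ∑ B ∈ π, (B.card / (B.image red).card - 1)
      = (k+1) * (redPart π).card - π.card := by
    have h1 : ∑ B ∈ π, (B.card / (B.image red).card - 1) + π.card
        = ∑ B ∈ π, (B.card / (B.image red).card) := by
      rw [Finset.card_eq_sum_ones π, ← Finset.sum_add_distrib]
      apply Finset.sum_congr rfl
      intro B hB
      have := hone1 B hB
      omega
    omega
  have hsub2 : ∑ C ∈ qExp π, (C.card / (C.image red).card - 1)
      = (k+1) * (redPart (qExp π)).card - (qExp π).card := by
    have h1 : ∑ C ∈ qExp π, (C.card / (C.image red).card - 1) + (qExp π).card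
        = ∑ C ∈ qExp π, (C.card / (C.image red).card) := by
      rw [Finset.card_eq_sum_ones (qExp π), ← Finset.sum_add_distrib]
      apply Finset.sum_congr rfl
      intro C hC
      have := hone2 C hC
      omega
    omega
  rw [hsub1, hsub2]
  -- final arithmetic
  have hRQ : (redPart π).card + (redPart (qExp π)).card = n + 1 := by omega
  have hmul : (k+1) * (redPart π).card + (k+1) * (redPart (qExp π)).card
      = (k+1) * n + (k + 1) := by
    calc (k+1) * (redPart π).card + (k+1) * (redPart (qExp π)).card
        = (k+1) * ((redPart π).card + (redPart (qExp π)).card) := by ring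
      _ = (k+1) * (n+1) := by rw [hRQ]
      _ = (k+1) * n + (k+1) := by ring
  omega

end Final

/-- **Statement 13.** For every `π ∈ NC^{(k)}(n)`, writing `mult(V) = |V| / |Red(V)|`
for a block `V` of `π ∪ Kr(π)`:
`Σ_{V ∈ blocks(π ∪ Kr(π))} (mult(V) − 1) = k`. -/
theorem stmt13 (k n : ℕ) (hn : 1 ≤ n)
    (π : Finset (Finset (Fin ((k + 1) * n)))) (hπ : π ∈ NCk k n) :
    ∑ V ∈ unionPart π (kr π), (V.card / (V.image redInterl).card - 1) = k :=
  stmt13' hn π hπ
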